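/- arXiv:1911.11562 — 4 statements merged into one kernel-verified Lean document; each statement's English description precedes it below -/
import Mathlib

section
/- There exists a universal constant C > 0 such that for every positive integer n and every partition Π of {1,...,n} into k pairwise disjoint intervals, there exists a recursive dyadic partition Π̃ of {1,...,n} that refines Π (every interval of Π̃ is contained in some interval of Π) with |Π̃| ≤ C·k·log₂(en/k). Equivalently, for all θ ∈ ℝ^n and all integers r ≥ 0, k^(r)_rdp(θ) ≤ C·k^(r)_all(θ)·log(en/k^(r)_all(θ)). -/
open MeasureTheory ProbabilityTheory BigOperators

attribute [local instance] Classical.propDecidable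

noncomputable section

/-- The `d`-dimensional lattice with `n` points per side (0-indexed; the point
`x` corresponds to `(x 0 + 1, …, x (d-1) + 1) ∈ {1,…,n}^d`). -/
abbrev Grid (d n : ℕ) := Fin d → Fin n

/-- Squared Euclidean norm of a vector indexed by `ι`. -/
def sumSq {ι : Type*} [Fintype ι] (f : ι → ℝ) : ℝ := ∑ x, (f x) ^ 2

/-- A dyadic interval of `{1,…,n}` (0-indexed as a subset of `Fin n`):
`[(a-1)·2^s + 1, a·2^s]` in 1-indexed terms. -/
def IsDyadicInterval (n : ℕ) (I : Set (Fin n)) : Prop :=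
  ∃ s a : ℕ, 1 ≤ a ∧ a * 2 ^ s ≤ n ∧
    I = {x : Fin n | (a - 1) * 2 ^ s ≤ (x : ℕ) ∧ (x : ℕ) < a * 2 ^ s}

/-- A (nonempty) integer interval in `{1,…,n}`. -/
def IsIntervalSet {n : ℕ} (I : Set (Fin n)) : Prop :=
  I.Nonempty ∧ ∃ a b : Fin n, I = Set.Icc a b

/-- A partition of `{1,…,n}` into intervals. -/
def IsIntervalPartition {n : ℕ} (P : Finset (Set (Fin n))) : Prop :=
  (∀ I ∈ P, IsIntervalSet I) ∧ (∀ I ∈ P, ∀ J ∈ P, I ≠ J → Disjoint I J) ∧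
    (⋃ I ∈ P, I) = Set.univ

/-- A dyadic split of an interval into two halves. -/
def IsDyadicSplit1 {n : ℕ} (I I₁ I₂ : Set (Fin n)) : Prop :=
  ∃ a b : Fin n, a < b ∧ I = Set.Icc a b ∧
    I₁ = {x ∈ I | (x : ℕ) ≤ (a : ℕ) + ((b : ℕ) - (a : ℕ)) / 2} ∧ I₂ = I \ I₁

/-- Recursive dyadic partitions of `{1,…,n}`. -/
inductive IsRDP1 (n : ℕ) : Finset (Set (Fin n)) → Prop where
  | triv : IsRDP1 n {Set.univ}
  | split (P : Finset (Set (Fin n))) (I I₁ I₂ : Set (Fin n)) :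
      IsRDP1 n P → I ∈ P → IsDyadicSplit1 I I₁ I₂ →
      IsRDP1 n (insert I₁ (insert I₂ (P.erase I)))

/-- `θ` is a discrete polynomial of degree at most `r` on the interval `I ⊆ {1,…,n}`. -/
def IsPolyOn1 {n : ℕ} (r : ℕ) (θ : Fin n → ℝ) (I : Set (Fin n)) : Prop :=
  ∃ f : Polynomial ℝ, f.natDegree ≤ r ∧
    ∀ x ∈ I, θ x = Polynomial.eval ((((x : ℕ) : ℝ) + 1) / n) f

/-- `k^(r)_all(θ)` for univariate `θ`. -/
def kAll1 {n : ℕ} (r : ℕ) (θ : Fin n → ℝ) : ℕ :=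
  sInf {k | ∃ P : Finset (Set (Fin n)),
    IsIntervalPartition P ∧ (∀ I ∈ P, IsPolyOn1 r θ I) ∧ P.card = k}

/-- `k^(r)_rdp(θ)` for univariate `θ`. -/
def kRdp1 {n : ℕ} (r : ℕ) (θ : Fin n → ℝ) : ℕ :=
  sInf {k | ∃ P : Finset (Set (Fin n)),
    IsRDP1 n P ∧ (∀ I ∈ P, IsPolyOn1 r θ I) ∧ P.card = k}

/-- `V^(r)(θ) = n^(r-1) · ‖D^(r) θ‖₁`, the `r`-th order total variation of `θ ∈ ℝ^n`. -/
def Vr {n : ℕ} (r : ℕ) (θ : Fin n → ℝ) : ℝ :=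
  (n : ℝ) ^ (r - 1) * ∑ j ∈ Finset.range (n - r),
    |∑ i ∈ Finset.range (r + 1),
      (-1 : ℝ) ^ (r - i) * (r.choose i : ℝ) * (if h : j + i < n then θ ⟨j + i, h⟩ else 0)|

end

noncomputable section S8aux
namespace S8

open Real

lemma inv_log_two_le_two : 1 / Real.log 2 ≤ 2 := by
  rw [div_le_iff₀ (Real.log_pos one_lt_two)]
  nlinarith [Real.log_two_gt_d9]

lemma logb_nat_le {s : ℕ} {D : ℕ} (h : s ≤ 2 ^ D) : Real.logb 2 s ≤ D := by
  rcases Nat.eq_zero_or_pos s with hs | hs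
  · simp [hs, Real.logb]
  calc Real.logb 2 s ≤ Real.logb 2 ((2:ℝ) ^ D) := by
        apply Real.logb_le_logb_of_le one_lt_two (by positivity)
        exact_mod_cast h
    _ = D := by rw [Real.logb_pow, Real.logb_self_eq_one one_lt_two]; ring

/-- monotonicity of `x ↦ x*K - x*logb 2 x`. -/
lemma mono_xK (K x y : ℝ) (h1 : 1 ≤ x) (hxy : x ≤ y)
    (hK : Real.logb 2 y + 1 / Real.log 2 ≤ K) :
    x * K - x * Real.logb 2 x ≤ y * K - y * Real.logb 2 y := by
  have hx : 0 < x := by linarith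
  have hy : 0 < y := by linarith
  have hlog2 : 0 < Real.log 2 := Real.log_pos one_lt_two
  have key : y * Real.logb 2 y - x * Real.logb 2 x ≤ (y - x) * K := by
    have h2 : Real.logb 2 y - Real.logb 2 x ≤ (y/x - 1) / Real.log 2 := by
      rw [Real.logb, Real.logb, div_sub_div_same, div_le_div_iff_of_pos_right hlog2]
      rw [← Real.log_div (ne_of_gt hy) (ne_of_gt hx)]
      exact Real.log_le_sub_one_of_pos (by positivity)
    have h3 : x * (Real.logb 2 y - Real.logb 2 x) ≤ (y - x) / Real.log 2 := by
      calc x * (Real.logb 2 y - Real.logb 2 x) ≤ x * ((y/x - 1) / Real.log 2) := by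
            apply mul_le_mul_of_nonneg_left h2 (le_of_lt hx)
        _ = (y - x) / Real.log 2 := by field_simp
    have h4 : y * Real.logb 2 y - x * Real.logb 2 x
        = (y - x) * Real.logb 2 y + x * (Real.logb 2 y - Real.logb 2 x) := by ring
    have h5 : (y - x) / Real.log 2 ≤ (y - x) * (1 / Real.log 2) := by
      rw [mul_one_div]
    have h6 : (y - x) * Real.logb 2 y + (y - x) * (1/Real.log 2) ≤ (y - x) * K := by
      rw [← mul_add]
      exact mul_le_mul_of_nonneg_left hK (by linarith)
    linarith
  linarith

/-- binary entropy bound -/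
lemma entropy (s1 s2 : ℕ) (h1 : 1 ≤ s1) (h2 : 1 ≤ s2) :
    ((s1:ℝ) + s2) * Real.logb 2 ((s1:ℝ)+s2) - ((s1:ℝ)+s2)
      ≤ s1 * Real.logb 2 s1 + s2 * Real.logb 2 s2 := by
  have hs1 : (0:ℝ) < s1 := by exact_mod_cast h1
  have hs2 : (0:ℝ) < s2 := by exact_mod_cast h2
  set t : ℝ := (s1:ℝ) + s2 with ht
  have htpos : 0 < t := by positivity
  have hlog2 : 0 < Real.log 2 := Real.log_pos one_lt_two
  have key : ∀ u : ℝ, 0 < u → u * Real.log t - u * Real.log 2 - u * Real.log u ≤ t/2 - u := by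
    intro u hu
    have : Real.log (t / (2*u)) ≤ t/(2*u) - 1 := Real.log_le_sub_one_of_pos (by positivity)
    have hexp : Real.log (t / (2*u)) = Real.log t - Real.log 2 - Real.log u := by
      rw [Real.log_div (ne_of_gt htpos) (by positivity), Real.log_mul (by norm_num) (ne_of_gt hu)]
      ring
    have := mul_le_mul_of_nonneg_left this (le_of_lt hu)
    rw [hexp] at this
    have he : u * (t / (2*u) - 1) = t/2 - u := by field_simp
    nlinarith
  have k1 := key s1 hs1
  have k2 := key s2 hs2
  have hsum : t * Real.log t - t * Real.log 2 - ((s1:ℝ) * Real.log s1 + s2 * Real.log s2) ≤ 0 := by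
    have hexp : t * Real.log t = (s1:ℝ) * Real.log t + s2 * Real.log t := by rw [ht]; ring
    have hexp2 : t * Real.log 2 = (s1:ℝ) * Real.log 2 + s2 * Real.log 2 := by rw [ht]; ring
    linarith
  have : t * Real.logb 2 t - t - ((s1:ℝ) * Real.logb 2 s1 + s2 * Real.logb 2 s2) ≤ 0 := by
    have e1 : Real.logb 2 t = Real.log t / Real.log 2 := rfl
    have e2 : Real.logb 2 (s1:ℝ) = Real.log s1 / Real.log 2 := rfl
    have e3 : Real.logb 2 (s2:ℝ) = Real.log s2 / Real.log 2 := rfl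
    have hG : t * (Real.log t / Real.log 2) - t - ((s1:ℝ) * (Real.log s1 / Real.log 2) + s2 * (Real.log s2 / Real.log 2))
        = (t * Real.log t - t * Real.log 2 - ((s1:ℝ) * Real.log s1 + s2 * Real.log s2)) / Real.log 2 := by
      field_simp
    rw [e1, e2, e3, hG]
    rw [div_nonpos_iff]; right; exact ⟨hsum, hlog2.le⟩
  linarith



/-- bound on number of internal nodes -/
def Ab (D s : ℕ) : ℝ := if s = 0 then 0 else s * (D + 2) - s * Real.logb 2 s - 1

lemma inv_log_two_le_two' : 1 / Real.log 2 ≤ 2 := by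
  rw [div_le_iff₀ (Real.log_pos one_lt_two)]
  nlinarith [Real.log_two_gt_d9]

lemma core (d s s1 s2 : ℕ) (hsum : s1 + s2 ≤ s) (hs : 1 ≤ s)
    (hlog : Real.logb 2 s ≤ (d:ℝ) + 1) :
    (Ab d s1 + 1) + (Ab d s2 + 1) ≤ Ab (d+1) s + 1 := by
  have hsR : (1:ℝ) ≤ s := by exact_mod_cast hs
  have hlogs_nonneg : 0 ≤ Real.logb 2 s :=
    Real.logb_nonneg one_lt_two (by exact_mod_cast hs)
  have hAbS : Ab (d+1) s = s * ((d:ℝ) + 3) - s * Real.logb 2 s - 1 := by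
    rw [Ab, if_neg (by omega)]; push_cast; ring_nf
  rcases Nat.eq_zero_or_pos s1 with h1 | h1 <;> rcases Nat.eq_zero_or_pos s2 with h2 | h2
  · -- both zero
    rw [Ab, if_pos h1, Ab, if_pos h2, hAbS]
    nlinarith
  · -- s1 = 0, s2 ≥ 1
    rw [Ab, if_pos h1, Ab, if_neg (by omega), hAbS]
    have hs2R : (1:ℝ) ≤ s2 := by exact_mod_cast h2
    have hs2s : (s2:ℝ) ≤ s := by exact_mod_cast le_trans (Nat.le_add_left _ _) hsum
    have hm := mono_xK ((d:ℝ) + 3) s2 s hs2R hs2s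
      (by have := inv_log_two_le_two'; linarith)
    nlinarith
  · -- s1 ≥ 1, s2 = 0
    rw [Ab, if_neg (by omega), Ab, if_pos h2, hAbS]
    have hs1R : (1:ℝ) ≤ s1 := by exact_mod_cast h1
    have hs1s : (s1:ℝ) ≤ s := by exact_mod_cast le_trans (Nat.le_add_right _ _) hsum
    have hm := mono_xK ((d:ℝ) + 3) s1 s hs1R hs1s
      (by have := inv_log_two_le_two'; linarith)
    nlinarith
  · -- both ≥ 1
    rw [Ab, if_neg (by omega), Ab, if_neg (by omega), hAbS]
    have hs1R : (1:ℝ) ≤ s1 := by exact_mod_cast h1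
    have hs2R : (1:ℝ) ≤ s2 := by exact_mod_cast h2
    have htR : (1:ℝ) ≤ (s1:ℝ) + s2 := by linarith
    have htsN : s1 + s2 ≤ s := hsum
    have htsR : (s1:ℝ) + s2 ≤ s := by exact_mod_cast htsN
    have hent := entropy s1 s2 h1 h2
    have hm := mono_xK ((d:ℝ) + 3) ((s1:ℝ) + s2) s htR htsR
      (by have := inv_log_two_le_two'; linarith)
    nlinarith


def dy (S : Finset ℕ) (a b : ℕ) : Finset (ℕ × ℕ) :=
  if h : ∃ c ∈ S, a ≤ c ∧ c < b then
    dy S a (a + (b - a) / 2) ∪ dy S (a + (b - a) / 2 + 1) b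
  else {(a, b)}
termination_by b - a
decreasing_by
  · obtain ⟨c, _, h⟩ := h; omega
  · obtain ⟨c, _, h⟩ := h; omega

lemma dy_mem (S : Finset ℕ) : ∀ N a b, b - a ≤ N → a ≤ b → ∀ p ∈ dy S a b,
    a ≤ p.1 ∧ p.1 ≤ p.2 ∧ p.2 ≤ b ∧ ∀ c ∈ S, ¬(p.1 ≤ c ∧ c < p.2) := by
  intro N
  induction N with
  | zero =>
    intro a b hab hab2 p hp
    rw [dy, dif_neg (by rintro ⟨c, _, hc⟩; omega)] at hp
    simp only [Finset.mem_singleton] at hp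
    subst hp
    refine ⟨le_refl _, hab2, le_refl _, ?_⟩
    intro c _ hc; omega
  | succ N ih =>
    intro a b hab hab2 p hp
    rw [dy] at hp
    split_ifs at hp with h
    · obtain ⟨c, hcS, hc⟩ := h
      set m := a + (b - a) / 2 with hm
      rw [Finset.mem_union] at hp
      rcases hp with hp | hp
      · obtain ⟨q1, q2, q3, q4⟩ := ih a m (by omega) (by omega) p hp
        exact ⟨q1, q2, by omega, q4⟩
      · obtain ⟨q1, q2, q3, q4⟩ := ih (m+1) b (by omega) (by omega) p hp
        exact ⟨by omega, q2, q3, q4⟩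
    · simp only [Finset.mem_singleton] at hp
      subst hp
      refine ⟨le_refl _, hab2, le_refl _, ?_⟩
      intro c hcS hc
      exact absurd ⟨c, hcS, hc⟩ h

lemma dy_card (S : Finset ℕ) : ∀ N a b D, b - a ≤ N → b - a < 2^D →
    ((dy S a b).card : ℝ) ≤ Ab D ((S.filter fun c => a ≤ c ∧ c < b).card) + 1 := by
  intro N
  induction N with
  | zero =>
    intro a b D hab hD
    rw [dy, dif_neg (by rintro ⟨c, _, hc⟩; omega)]
    have hf : (S.filter fun c => a ≤ c ∧ c < b) = ∅ := by
      apply Finset.filter_eq_empty_iff.mpr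
      intro c _ hc; omega
    simp [hf, Ab]
  | succ N ih =>
    intro a b D hab hD
    by_cases h : ∃ c ∈ S, a ≤ c ∧ c < b
    swap
    · rw [dy, dif_neg h]
      have hf : (S.filter fun c => a ≤ c ∧ c < b) = ∅ := by
        apply Finset.filter_eq_empty_iff.mpr
        intro c hcS hc; exact h ⟨c, hcS, hc⟩
      simp [hf, Ab]
    · obtain ⟨c, hcS, hc⟩ := h
      rcases D with _ | d
      · exfalso; simp only [pow_zero] at hD; omega
      have h2d : (2:ℕ)^(d+1) = 2 * 2^d := by rw [pow_succ]; ring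
      rw [dy, dif_pos ⟨c, hcS, hc⟩]
      set m := a + (b - a) / 2 with hm
      have ih1 := ih a m d (by omega) (by omega)
      have ih2 := ih (m+1) b d (by omega) (by omega)
      set s1 := (S.filter fun c => a ≤ c ∧ c < m).card with hs1
      set s2 := (S.filter fun c => m+1 ≤ c ∧ c < b).card with hs2
      set s := (S.filter fun c => a ≤ c ∧ c < b).card with hs
      have hdisj : Disjoint (S.filter fun c => a ≤ c ∧ c < m)
          (S.filter fun c => m+1 ≤ c ∧ c < b) := by
        rw [Finset.disjoint_left]
        intro x hx1 hx2
        rw [Finset.mem_filter] at hx1 hx2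
        omega
      have hsub : (S.filter fun c => a ≤ c ∧ c < m) ∪ (S.filter fun c => m+1 ≤ c ∧ c < b)
          ⊆ S.filter fun c => a ≤ c ∧ c < b := by
        intro x hx
        rw [Finset.mem_union, Finset.mem_filter, Finset.mem_filter] at hx
        rw [Finset.mem_filter]
        rcases hx with hx | hx <;> exact ⟨hx.1, by omega⟩
      have hsum : s1 + s2 ≤ s := by
        rw [hs1, hs2, ← Finset.card_union_of_disjoint hdisj]
        exact Finset.card_le_card hsub
      have hspos : 1 ≤ s := by
        rw [hs]
        apply Finset.card_pos.mpr
        exact ⟨c, Finset.mem_filter.mpr ⟨hcS, hc⟩⟩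
      have hsle : s ≤ 2^(d+1) := by
        have : (S.filter fun c => a ≤ c ∧ c < b) ⊆ Finset.Ico a b := by
          intro x hx
          rw [Finset.mem_filter] at hx
          rw [Finset.mem_Ico]
          omega
        have := Finset.card_le_card this
        rw [Nat.card_Ico] at this
        omega
      have hlog : Real.logb 2 s ≤ (d:ℝ) + 1 := by
        have := logb_nat_le (s := s) (D := d+1) hsle
        push_cast at this
        linarith
      calc ((dy S a m ∪ dy S (m+1) b).card : ℝ)
          ≤ ((dy S a m).card : ℝ) + ((dy S (m+1) b).card : ℝ) := by
            exact_mod_cast Finset.card_union_le _ _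
        _ ≤ (Ab d s1 + 1) + (Ab d s2 + 1) := by linarith
        _ ≤ Ab (d+1) s + 1 := core d s s1 s2 hsum hspos hlog
def pSet (n : ℕ) (p : ℕ × ℕ) : Set (Fin n) := {x | p.1 ≤ (x : ℕ) ∧ (x : ℕ) ≤ p.2}

def GoodP {n : ℕ} (P : Finset (Set (Fin n))) : Prop :=
  (∀ I ∈ P, I.Nonempty) ∧ ∀ I ∈ P, ∀ J ∈ P, I ≠ J → Disjoint I J

lemma isRDP1_good {n : ℕ} (hn : 1 ≤ n) {P : Finset (Set (Fin n))}
    (h : IsRDP1 n P) : GoodP P := by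
  induction h with
  | triv =>
    constructor
    · intro I hI
      rw [Finset.mem_singleton] at hI
      subst hI
      exact ⟨⟨0, hn⟩, Set.mem_univ _⟩
    · intro I hI J hJ hIJ
      rw [Finset.mem_singleton] at hI hJ
      exact absurd (hI.trans hJ.symm) hIJ
  | split P I I₁ I₂ hP hI hsplit ih =>
    obtain ⟨a, b, hab, hIe, hI₁, hI₂⟩ := hsplit
    have hsub1 : I₁ ⊆ I := by rw [hI₁]; intro x hx; exact hx.1
    have hsub2 : I₂ ⊆ I := by rw [hI₂]; intro x hx; exact hx.1
    have hne1 : I₁.Nonempty := by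
      refine ⟨a, ?_⟩
      rw [hI₁]
      exact ⟨by rw [hIe]; exact Set.mem_Icc.mpr ⟨le_refl _, le_of_lt hab⟩, by omega⟩
    have hne2 : I₂.Nonempty := by
      refine ⟨b, ?_⟩
      rw [hI₂]
      constructor
      · rw [hIe]; exact Set.mem_Icc.mpr ⟨le_of_lt hab, le_refl _⟩
      · rw [hI₁]
        rintro ⟨-, hb⟩
        have : (a:ℕ) < (b:ℕ) := hab
        omega
    have hd12 : Disjoint I₁ I₂ := by
      rw [hI₂, Set.disjoint_right]
      intro x hx
      exact hx.2
    have hdold : ∀ J ∈ P.erase I, Disjoint I J := by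
      intro J hJ
      rw [Finset.mem_erase] at hJ
      exact (ih.2 I hI J hJ.2 (Ne.symm hJ.1))
    constructor
    · intro K hK
      rcases Finset.mem_insert.mp hK with rfl | hK
      · exact hne1
      rcases Finset.mem_insert.mp hK with rfl | hK
      · exact hne2
      · exact ih.1 K (Finset.mem_of_mem_erase hK)
    · intro K hK L hL hKL
      have key : ∀ M, (M = I₁ ∨ M = I₂ ∨ M ∈ P.erase I) →
          ∀ M', (M' = I₁ ∨ M' = I₂ ∨ M' ∈ P.erase I) → M ≠ M' → Disjoint M M' := by
        rintro M (rfl | rfl | hM) M' (rfl | rfl | hM') hMM'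
        · exact absurd rfl hMM'
        · exact hd12
        · exact (Disjoint.mono_left hsub1 (hdold _ hM')).symm.symm
        · exact hd12.symm
        · exact absurd rfl hMM'
        · exact Disjoint.mono_left hsub2 (hdold _ hM')
        · exact (Disjoint.mono_left hsub1 (hdold _ hM)).symm
        · exact (Disjoint.mono_left hsub2 (hdold _ hM)).symm
        · exact ih.2 M (Finset.mem_of_mem_erase hM) M' (Finset.mem_of_mem_erase hM') hMM'
      have hK' : K = I₁ ∨ K = I₂ ∨ K ∈ P.erase I := by
        rcases Finset.mem_insert.mp hK with h | h
        · exact Or.inl h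
        rcases Finset.mem_insert.mp h with h | h
        · exact Or.inr (Or.inl h)
        · exact Or.inr (Or.inr h)
      have hL' : L = I₁ ∨ L = I₂ ∨ L ∈ P.erase I := by
        rcases Finset.mem_insert.mp hL with h | h
        · exact Or.inl h
        rcases Finset.mem_insert.mp h with h | h
        · exact Or.inr (Or.inl h)
        · exact Or.inr (Or.inr h)
      exact key K hK' L hL' hKL
lemma rdp_step {n : ℕ} (hn : 1 ≤ n) (S : Finset ℕ) :
    ∀ N a b, b - a ≤ N → b < n →
    ∀ P : Finset (Set (Fin n)), IsRDP1 n P → pSet n (a, b) ∈ P →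
    IsRDP1 n (P.erase (pSet n (a, b)) ∪ (dy S a b).image (pSet n)) := by
  intro N
  induction N with
  | zero =>
    intro a b hab hbn P hP hIP
    rw [dy, dif_neg (by rintro ⟨c, _, hc⟩; omega), Finset.image_singleton,
      Finset.union_comm, ← Finset.insert_eq, Finset.insert_erase hIP]
    exact hP
  | succ N ih =>
    intro a b hab hbn P hP hIP
    by_cases hcut : ∃ c ∈ S, a ≤ c ∧ c < b
    swap
    · rw [dy, dif_neg hcut, Finset.image_singleton,
        Finset.union_comm, ← Finset.insert_eq, Finset.insert_erase hIP]
      exact hP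
    obtain ⟨c, hcS, hc⟩ := hcut
    have haltb : a < b := by omega
    have han : a < n := by omega
    set m := a + (b - a) / 2 with hm
    have hmb : m < b := by omega
    have hmn : m < n := by omega
    set I := pSet n (a, b) with hI
    set I₁ := pSet n (a, m) with hI₁
    set I₂ := pSet n (m + 1, b) with hI₂
    have memA : ∀ (u v : ℕ) (x : Fin n), x ∈ pSet n (u, v) ↔ u ≤ (x:ℕ) ∧ (x:ℕ) ≤ v :=
      fun _ _ _ => Iff.rfl
    have val_mk : ∀ (u : ℕ) (h : u < n), ((⟨u, h⟩ : Fin n) : ℕ) = u := fun _ _ => rfl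
    have hsplit : IsDyadicSplit1 I I₁ I₂ := by
      refine ⟨⟨a, han⟩, ⟨b, hbn⟩, haltb, ?_, ?_, ?_⟩
      · ext x
        simp only [hI, memA, Set.mem_Icc, Fin.le_def, val_mk]
      · ext x
        simp only [hI₁, hI, memA, Set.mem_sep_iff, Set.mem_setOf_eq, val_mk, hm]
        omega
      · ext x
        simp only [hI₂, hI, hI₁, memA, Set.mem_diff, Set.mem_setOf_eq, val_mk, hm]
        omega
    have good : GoodP P := isRDP1_good hn hP
    have hsub1 : I₁ ⊆ I := by
      intro x hx; rw [hI₁, memA] at hx; rw [hI, memA]; omega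
    have hsub2 : I₂ ⊆ I := by
      intro x hx; rw [hI₂, memA] at hx; rw [hI, memA]; omega
    have hne1 : I₁.Nonempty := by
      refine ⟨⟨a, han⟩, ?_⟩
      rw [hI₁, memA, val_mk]
      omega
    have hne2 : I₂.Nonempty := by
      refine ⟨⟨b, hbn⟩, ?_⟩
      rw [hI₂, memA, val_mk]
      omega
    have notmem_erase : ∀ K : Set (Fin n), K ⊆ I → K.Nonempty → K ∉ P.erase I := by
      intro K hKI hKne hmem
      have hd : Disjoint I K :=
        good.2 I hIP K (Finset.mem_of_mem_erase hmem)
          (Ne.symm (Finset.mem_erase.mp hmem).1)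
      obtain ⟨x, hx⟩ := hKne
      exact Set.disjoint_left.mp hd (hKI hx) hx
    have f2 : I₁ ∉ P.erase I := notmem_erase I₁ hsub1 hne1
    have f3 : I₂ ∉ P.erase I := notmem_erase I₂ hsub2 hne2
    have f1 : I₁ ≠ I₂ := by
      intro h
      have h0 : (⟨a, han⟩ : Fin n) ∈ I₁ := by
        rw [hI₁, memA, val_mk]; omega
      rw [h, hI₂, memA, val_mk] at h0
      omega
    set D₁ := (dy S a m).image (pSet n) with hD₁
    set D₂ := (dy S (m+1) b).image (pSet n) with hD₂
    have f4 : I₂ ∉ D₁ := by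
      intro h
      rw [hD₁, Finset.mem_image] at h
      obtain ⟨p, hp, hpe⟩ := h
      obtain ⟨q1, q2, q3, -⟩ := dy_mem S (m - a) a m (le_refl _) (by omega) p hp
      have hmn1 : m + 1 < n := by omega
      have hfm : (⟨m+1, hmn1⟩ : Fin n) ∈ I₂ := by
        rw [hI₂, memA, val_mk]; omega
      rw [← hpe, memA, val_mk] at hfm
      omega
    set P' := insert I₁ (insert I₂ (P.erase I)) with hP'
    have hRDP' : IsRDP1 n P' := IsRDP1.split P I I₁ I₂ hP hIP hsplit
    have hI₁mem : I₁ ∈ P' := Finset.mem_insert_self _ _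
    have ih1 := ih a m (by omega) (by omega) P' hRDP' hI₁mem
    have e1 : P'.erase I₁ = insert I₂ (P.erase I) := by
      rw [hP']
      apply Finset.erase_insert
      simp only [Finset.mem_insert]
      rintro (h | h)
      · exact f1 h
      · exact f2 h
    have hI₂mem : I₂ ∈ P'.erase I₁ ∪ D₁ := by
      apply Finset.mem_union_left
      rw [e1]
      exact Finset.mem_insert_self _ _
    have ih2 := ih (m+1) b (by omega) hbn _ ih1 hI₂mem
    have e2 : ((P'.erase I₁ ∪ D₁).erase I₂) ∪ D₂ = P.erase I ∪ (D₁ ∪ D₂) := by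
      rw [e1, Finset.erase_union_distrib, Finset.erase_insert f3,
        Finset.erase_eq_of_notMem f4, Finset.union_assoc]
    rw [e2] at ih2
    rw [dy, dif_pos ⟨c, hcS, hc⟩, Finset.image_union]
    exact ih2
def cutOf {n : ℕ} (J : Set (Fin n)) : ℕ := sSup ((fun x : Fin n => (x : ℕ)) '' J)

lemma cutOf_Icc {n : ℕ} (p q : Fin n) (h : p ≤ q) : cutOf (Set.Icc p q) = (q : ℕ) := by
  have himg : (fun x : Fin n => (x : ℕ)) '' (Set.Icc p q) = Set.Icc (p : ℕ) (q : ℕ) := by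
    ext m
    simp only [Set.mem_image, Set.mem_Icc]
    constructor
    · rintro ⟨x, ⟨h1, h2⟩, rfl⟩
      exact ⟨h1, h2⟩
    · rintro ⟨h1, h2⟩
      have hmn : m < n := lt_of_le_of_lt h2 q.isLt
      exact ⟨⟨m, hmn⟩, ⟨h1, h2⟩, rfl⟩
  rw [cutOf, himg, csSup_Icc h]

lemma next_in_part {n : ℕ} {Pin : Finset (Set (Fin n))} (hPin : IsIntervalPartition Pin)
    {J : Set (Fin n)} (hJ : J ∈ Pin) (w : ℕ) (hw : w + 1 < n)
    (hwS : w ∉ Pin.image cutOf)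
    (hm : (⟨w, by omega⟩ : Fin n) ∈ J) : (⟨w + 1, hw⟩ : Fin n) ∈ J := by
  obtain ⟨hne, p, q, hJe⟩ := hPin.1 J hJ
  rw [hJe] at hne hm ⊢
  have hpq : p ≤ q := Set.nonempty_Icc.mp hne
  rw [Set.mem_Icc] at hm
  have h1 : (p : ℕ) ≤ w := hm.1
  have h2 : w ≤ (q : ℕ) := hm.2
  rcases Nat.lt_or_ge w (q : ℕ) with hlt | hge
  · rw [Set.mem_Icc]
    constructor
    · exact le_trans hm.1 (by exact Nat.le_succ w)
    · exact hlt
  · exfalso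
    have hwq : w = (q : ℕ) := le_antisymm h2 hge
    apply hwS
    rw [Finset.mem_image]
    refine ⟨J, hJ, ?_⟩
    rw [hJe, cutOf_Icc p q hpq, hwq]

lemma run_in_part {n : ℕ} (hn : 1 ≤ n) {Pin : Finset (Set (Fin n))}
    (hPin : IsIntervalPartition Pin) (u v : ℕ) (hv : v < n) (huv : u ≤ v)
    (hfree : ∀ c ∈ Pin.image cutOf, ¬(u ≤ c ∧ c < v)) :
    ∃ J ∈ Pin, ∀ w (h1 : u ≤ w) (h2 : w ≤ v), (⟨w, by omega⟩ : Fin n) ∈ J := by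
  have hun : u < n := by omega
  have hcov : (⟨u, hun⟩ : Fin n) ∈ ⋃ I ∈ Pin, I := by
    rw [hPin.2.2]; trivial
  rw [Set.mem_iUnion₂] at hcov
  obtain ⟨J, hJ, hu⟩ := hcov
  refine ⟨J, hJ, ?_⟩
  have key : ∀ k, ∀ _h : u + k ≤ v, (⟨u + k, by omega⟩ : Fin n) ∈ J := by
    intro k
    induction k with
    | zero => intro h; exact hu
    | succ k ih =>
      intro h
      have hk := ih (by omega)
      have hnotcut : u + k ∉ Pin.image cutOf := by
        intro hc
        exact hfree _ hc ⟨by omega, by omega⟩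
      exact next_in_part hPin hJ (u + k) (by omega) hnotcut hk
  intro w h1 h2
  have hkey := key (w - u) (by omega)
  have he : (⟨u + (w - u), by omega⟩ : Fin n) = ⟨w, by omega⟩ := by
    apply Fin.ext
    simp only
    omega
  rw [he] at hkey
  exact hkey

lemma card_partition_le {n : ℕ} (hn : 1 ≤ n) {Pin : Finset (Set (Fin n))}
    (hPin : IsIntervalPartition Pin) : Pin.card ≤ n := by
  have hne : ∀ J ∈ Pin, (J : Set (Fin n)).Nonempty := fun J hJ => (hPin.1 J hJ).1
  set f : Set (Fin n) → Fin n := fun J => if h : J.Nonempty then h.some else ⟨0, hn⟩ with hf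
  have hfmem : ∀ J ∈ Pin, f J ∈ J := by
    intro J hJ
    rw [hf]
    simp only [dif_pos (hne J hJ)]
    exact (hne J hJ).some_mem
  have hcard : Pin.card ≤ (Finset.univ : Finset (Fin n)).card := by
    apply Finset.card_le_card_of_injOn f (fun _ _ => Finset.mem_univ _)
    intro J hJ K hK hJK
    rw [Finset.mem_coe] at hJ hK
    by_contra hne'
    have hd := hPin.2.1 J hJ K hK hne'
    have h1 : f J ∈ J := hfmem J hJ
    have h2 : f K ∈ K := hfmem K hK
    rw [hJK] at h1
    exact Set.disjoint_left.mp hd h1 h2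
  rw [Finset.card_univ, Fintype.card_fin] at hcard
  exact hcard

lemma partition_nonempty {n : ℕ} (hn : 1 ≤ n) {Pin : Finset (Set (Fin n))}
    (hPin : IsIntervalPartition Pin) : 1 ≤ Pin.card := by
  rw [Nat.one_le_iff_ne_zero, ← Nat.pos_iff_ne_zero, Finset.card_pos]
  have hcov : (⟨0, hn⟩ : Fin n) ∈ ⋃ I ∈ Pin, I := by rw [hPin.2.2]; trivial
  rw [Set.mem_iUnion₂] at hcov
  obtain ⟨J, hJ, -⟩ := hcov
  exact ⟨J, hJ⟩
lemma clog_le_logb (n : ℕ) (hn : 1 ≤ n) : ((Nat.clog 2 n : ℕ) : ℝ) ≤ Real.logb 2 n + 1 := by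
  rcases Nat.lt_or_ge n 2 with h2 | h2
  · have hn1 : n = 1 := by omega
    subst hn1
    simp [Nat.clog_one_right]
  · set D := Nat.clog 2 n with hD
    have hD1 : 1 ≤ D := Nat.clog_pos one_lt_two h2
    have hlt : 2 ^ (D - 1) < n := by
      have := Nat.pow_pred_clog_lt_self (one_lt_two) (by omega : 1 < n)
      exact this
    have hle : ((D - 1 : ℕ) : ℝ) ≤ Real.logb 2 n := by
      have h1 : ((2:ℝ) ^ (D - 1) : ℝ) ≤ (n : ℝ) := by
        exact_mod_cast le_of_lt hlt
      calc ((D - 1 : ℕ) : ℝ) = Real.logb 2 ((2:ℝ) ^ (D - 1)) := by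
            rw [Real.logb_pow, Real.logb_self_eq_one one_lt_two]; ring
        _ ≤ Real.logb 2 n := Real.logb_le_logb_of_le one_lt_two (by positivity) h1
    have hcast : ((D - 1 : ℕ) : ℝ) = (D : ℝ) - 1 := by
      have : (1:ℕ) ≤ D := hD1
      push_cast [Nat.cast_sub this]
      ring
    rw [hcast] at hle
    linarith

lemma one_le_inv_log_two : 1 ≤ 1 / Real.log 2 := by
  rw [le_div_iff₀ (Real.log_pos one_lt_two)]
  nlinarith [Real.log_two_lt_d9]

lemma final_bound (n D s k : ℕ) (hn : 1 ≤ n) (hDm : (D:ℝ) ≤ Real.logb 2 n + 1)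
    (hsk : s ≤ k) (hk1 : 1 ≤ k) (hkn : k ≤ n) :
    Ab D s + 1 ≤ 4 * k * Real.logb 2 (Real.exp 1 * n / k) := by
  have hkR : (1:ℝ) ≤ (k:ℝ) := by exact_mod_cast hk1
  have hnR : (1:ℝ) ≤ (n:ℝ) := by exact_mod_cast hn
  have hknR : (k:ℝ) ≤ (n:ℝ) := by exact_mod_cast hkn
  have hlog2 : 0 < Real.log 2 := Real.log_pos one_lt_two
  set E := Real.logb 2 (Real.exp 1 * n) with hE
  have hEeq : E = 1 / Real.log 2 + Real.logb 2 n := by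
    rw [hE, Real.logb_mul (Real.exp_ne_zero 1) (by positivity)]
    congr 1
    rw [Real.logb, Real.log_exp]
  have hEk : Real.logb 2 (Real.exp 1 * n / k) = E - Real.logb 2 k :=
    Real.logb_div (by positivity) (by positivity)
  have hlogkn : Real.logb 2 k ≤ Real.logb 2 n :=
    Real.logb_le_logb_of_le one_lt_two (by positivity) hknR
  have hlogk0 : 0 ≤ Real.logb 2 k := Real.logb_nonneg one_lt_two hkR
  have hil : 1 ≤ 1 / Real.log 2 := one_le_inv_log_two
  rw [hEk]
  rcases Nat.eq_zero_or_pos s with hs0 | hs1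
  · rw [Ab, if_pos hs0]
    have h1 : (1:ℝ) ≤ E - Real.logb 2 k := by
      rw [hEeq]; linarith
    nlinarith
  · rw [Ab, if_neg (by omega)]
    have hsR : (1:ℝ) ≤ (s:ℝ) := by exact_mod_cast hs1
    have hskR : (s:ℝ) ≤ (k:ℝ) := by exact_mod_cast hsk
    have hlogsn : Real.logb 2 s ≤ Real.logb 2 n :=
      Real.logb_le_logb_of_le one_lt_two (by positivity) (by linarith)
    have hlogs0 : 0 ≤ Real.logb 2 s := Real.logb_nonneg one_lt_two hsR
    have hlogn0 : 0 ≤ Real.logb 2 n := Real.logb_nonneg one_lt_two hnR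
    -- step 1 : s*(D+2) - s*logb s - 1 + 1 ≤ 4*(s*E - s*logb s)
    have step1 : (s:ℝ) * ((D:ℝ) + 2) - s * Real.logb 2 s ≤ 4 * ((s:ℝ) * E - s * Real.logb 2 s) := by
      have hEbig : 1 + Real.logb 2 n ≤ E := by rw [hEeq]; linarith
      nlinarith [mul_le_mul_of_nonneg_left hDm (by linarith : (0:ℝ) ≤ (s:ℝ)),
        mul_le_mul_of_nonneg_left hEbig (by linarith : (0:ℝ) ≤ (s:ℝ)),
        mul_le_mul_of_nonneg_left hlogsn (by linarith : (0:ℝ) ≤ (s:ℝ))]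
    -- step 2 : monotonicity from s to k
    have step2 : (s:ℝ) * E - s * Real.logb 2 s ≤ (k:ℝ) * E - k * Real.logb 2 k := by
      apply mono_xK E s k hsR hskR
      rw [hEeq]; linarith
    nlinarith
lemma claim {n : ℕ} (hn : 1 ≤ n) (Pin : Finset (Set (Fin n))) (hPin : IsIntervalPartition Pin) :
    ∃ Q : Finset (Set (Fin n)), IsRDP1 n Q ∧ (∀ I ∈ Q, ∃ J ∈ Pin, I ⊆ J) ∧
      (Q.card : ℝ) ≤ 4 * Pin.card * Real.logb 2 (Real.exp 1 * n / Pin.card) := by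
  set S := Pin.image cutOf with hS
  set Q := (dy S 0 (n-1)).image (pSet n) with hQ
  have huniv : pSet n (0, n - 1) = (Set.univ : Set (Fin n)) := by
    ext x
    simp only [pSet, Set.mem_setOf_eq, Set.mem_univ, iff_true]
    have := x.isLt
    omega
  refine ⟨Q, ?_, ?_, ?_⟩
  · have h1 := rdp_step hn S (n-1) 0 (n-1) (by omega) (by omega) {Set.univ} IsRDP1.triv
      (by rw [huniv]; exact Finset.mem_singleton_self _)
    rw [huniv] at h1
    have he : ({Set.univ} : Finset (Set (Fin n))).erase Set.univ = ∅ := by simp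
    rw [he, Finset.empty_union] at h1
    exact h1
  · intro I hI
    rw [hQ, Finset.mem_image] at hI
    obtain ⟨p, hp, rfl⟩ := hI
    obtain ⟨q1, q2, q3, q4⟩ := dy_mem S (n-1) 0 (n-1) (by omega) (by omega) p hp
    obtain ⟨J, hJ, hall⟩ := run_in_part hn hPin p.1 p.2 (by omega) q2
      (fun c hc hcon => q4 c hc hcon)
    refine ⟨J, hJ, ?_⟩
    intro x hx
    have hx' : p.1 ≤ (x:ℕ) ∧ (x:ℕ) ≤ p.2 := hx
    have hmem := hall (x:ℕ) hx'.1 hx'.2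
    have he : (⟨(x:ℕ), by omega⟩ : Fin n) = x := Fin.ext rfl
    rw [he] at hmem
    exact hmem
  · set D := Nat.clog 2 n with hD
    have hn2D : n ≤ 2 ^ D := Nat.le_pow_clog one_lt_two n
    have hcard1 := dy_card S (n-1) 0 (n-1) D (by omega) (by omega)
    set s := (S.filter fun c => 0 ≤ c ∧ c < n - 1).card with hs
    have hsk : s ≤ Pin.card :=
      le_trans (Finset.card_filter_le _ _) (by rw [hS]; exact Finset.card_image_le)
    have hk1 : 1 ≤ Pin.card := partition_nonempty hn hPin
    have hkn : Pin.card ≤ n := card_partition_le hn hPin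
    have hfb := final_bound n D s Pin.card hn (clog_le_logb n hn) hsk hk1 hkn
    have hQc : (Q.card : ℝ) ≤ ((dy S 0 (n-1)).card : ℝ) := by
      rw [hQ]; exact_mod_cast Finset.card_image_le
    linarith
end S8
end S8aux

/-- (Any interval partition of `{1,…,n}` with `k` intervals can be refined
into a recursive dyadic partition with at most `C k log₂(en/k)` intervals; consequently
`k^(r)_rdp(θ) ≤ C k^(r)_all(θ) log(en/k^(r)_all(θ))`. Lemma 8.3 of the paper). -/
theorem statement8 :
    ∃ C : ℝ, 0 < C ∧ ∀ n : ℕ, 1 ≤ n →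
      (∀ P : Finset (Set (Fin n)), IsIntervalPartition P →
        ∃ Q : Finset (Set (Fin n)), IsRDP1 n Q ∧
          (∀ I ∈ Q, ∃ J ∈ P, I ⊆ J) ∧
          (Q.card : ℝ) ≤ C * P.card * Real.logb 2 (Real.exp 1 * n / P.card)) ∧
      ∀ (θ : Fin n → ℝ) (r : ℕ),
        (kRdp1 r θ : ℝ)
          ≤ C * (kAll1 r θ : ℝ) * Real.log (Real.exp 1 * n / (kAll1 r θ : ℝ)) := by
  refine ⟨6, by norm_num, ?_⟩
  intro n hn
  constructor
  · intro P hP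
    obtain ⟨Q, h1, h2, h3⟩ := S8.claim hn P hP
    refine ⟨Q, h1, h2, ?_⟩
    have hk1 : 1 ≤ P.card := S8.partition_nonempty hn hP
    have hkn : P.card ≤ n := S8.card_partition_le hn hP
    have hKpos : (0:ℝ) < P.card := by exact_mod_cast hk1
    have hknR : (P.card : ℝ) ≤ n := by exact_mod_cast hkn
    have hx1 : (1:ℝ) ≤ Real.exp 1 * n / P.card := by
      rw [le_div_iff₀ hKpos]
      nlinarith [Real.exp_one_gt_d9]
    have hlogb0 : 0 ≤ Real.logb 2 (Real.exp 1 * n / P.card) :=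
      Real.logb_nonneg one_lt_two hx1
    nlinarith
  · intro θ r
    set Ps := Finset.univ.image (fun x : Fin n => ({x} : Set (Fin n))) with hPs
    have hPsPart : IsIntervalPartition Ps := by
      refine ⟨?_, ?_, ?_⟩
      · intro I hI
        rw [hPs, Finset.mem_image] at hI
        obtain ⟨x, -, rfl⟩ := hI
        exact ⟨⟨x, rfl⟩, x, x, (Set.Icc_self x).symm⟩
      · intro I hI J hJ hIJ
        rw [hPs, Finset.mem_image] at hI hJ
        obtain ⟨x, -, rfl⟩ := hI
        obtain ⟨y, -, rfl⟩ := hJ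
        have hxy : x ≠ y := fun h => hIJ (by rw [h])
        rw [Set.disjoint_left]
        intro z hz1 hz2
        rw [Set.mem_singleton_iff] at hz1 hz2
        exact hxy (hz1 ▸ hz2 ▸ rfl)
      · apply Set.eq_univ_iff_forall.mpr
        intro z
        rw [Set.mem_iUnion₂]
        exact ⟨{z}, Finset.mem_image_of_mem _ (Finset.mem_univ z), rfl⟩
    have hPsPoly : ∀ I ∈ Ps, IsPolyOn1 r θ I := by
      intro I hI
      rw [hPs, Finset.mem_image] at hI
      obtain ⟨x, -, rfl⟩ := hI
      refine ⟨Polynomial.C (θ x), by simp, ?_⟩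
      intro y hy
      rw [Set.mem_singleton_iff] at hy
      subst hy
      simp
    have hA : {k | ∃ P : Finset (Set (Fin n)),
        IsIntervalPartition P ∧ (∀ I ∈ P, IsPolyOn1 r θ I) ∧ P.card = k}.Nonempty :=
      ⟨Ps.card, Ps, hPsPart, hPsPoly, rfl⟩
    have hmem : ∃ P : Finset (Set (Fin n)),
        IsIntervalPartition P ∧ (∀ I ∈ P, IsPolyOn1 r θ I) ∧ P.card = kAll1 r θ :=
      Nat.sInf_mem hA
    obtain ⟨P₀, hP₀, hP₀poly, hP₀card⟩ := hmem
    obtain ⟨Q, hQrdp, hQref, hQcard⟩ := S8.claim hn P₀ hP₀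
    have hQpoly : ∀ I ∈ Q, IsPolyOn1 r θ I := by
      intro I hI
      obtain ⟨J, hJ, hIJ⟩ := hQref I hI
      obtain ⟨f, hfdeg, hfeval⟩ := hP₀poly J hJ
      exact ⟨f, hfdeg, fun x hx => hfeval x (hIJ hx)⟩
    have hle : kRdp1 r θ ≤ Q.card := Nat.sInf_le ⟨Q, hQrdp, hQpoly, rfl⟩
    have hk1 : 1 ≤ kAll1 r θ := hP₀card ▸ S8.partition_nonempty hn hP₀
    have hkn : kAll1 r θ ≤ n := hP₀card ▸ S8.card_partition_le hn hP₀
    rw [hP₀card] at hQcard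
    set K := kAll1 r θ with hK
    have hKpos : (0:ℝ) < K := by exact_mod_cast hk1
    have hknR : (K : ℝ) ≤ n := by exact_mod_cast hkn
    have hx1 : (1:ℝ) ≤ Real.exp 1 * n / K := by
      rw [le_div_iff₀ hKpos]
      nlinarith [Real.exp_one_gt_d9]
    have hlogpos : 0 ≤ Real.log (Real.exp 1 * n / K) := Real.log_nonneg hx1
    have hconv : Real.logb 2 (Real.exp 1 * n / K)
        = Real.log (Real.exp 1 * n / K) / Real.log 2 := rfl
    have hfinal : 4 * (K:ℝ) * Real.logb 2 (Real.exp 1 * n / K)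
        ≤ 6 * K * Real.log (Real.exp 1 * n / K) := by
      rw [hconv]
      have hlog2 : (0.6931471803:ℝ) < Real.log 2 := Real.log_two_gt_d9
      have hKL : 0 ≤ (K:ℝ) * Real.log (Real.exp 1 * n / K) :=
        mul_nonneg (le_of_lt hKpos) hlogpos
      have h1 : 4 * (K:ℝ) * (Real.log (Real.exp 1 * n / K) / Real.log 2)
          = (4 / Real.log 2) * ((K:ℝ) * Real.log (Real.exp 1 * n / K)) := by
        field_simp
      have h2 : (4:ℝ) / Real.log 2 ≤ 6 := by
        rw [div_le_iff₀ (by linarith : (0:ℝ) < Real.log 2)]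
        linarith
      rw [h1]
      calc (4 / Real.log 2) * ((K:ℝ) * Real.log (Real.exp 1 * n / K))
          ≤ 6 * ((K:ℝ) * Real.log (Real.exp 1 * n / K)) :=
            mul_le_mul_of_nonneg_right h2 hKL
        _ = 6 * (K:ℝ) * Real.log (Real.exp 1 * n / K) := by ring
    calc (kRdp1 r θ : ℝ) ≤ (Q.card : ℝ) := by exact_mod_cast hle
      _ ≤ 4 * K * Real.logb 2 (Real.exp 1 * n / K) := hQcard
      _ ≤ 6 * K * Real.log (Real.exp 1 * n / K) := hfinal
end

section
/- Let n = 2^k for a positive integer k. A rectangular partition Π of L_{2,n} = {1,...,n}² is a recursive dyadic partition if and only if each rectangle constituting Π is a product of two dyadic intervals of {1,...,n}. -/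
open MeasureTheory ProbabilityTheory BigOperators

attribute [local instance] Classical.propDecidable

noncomputable section

/-- An (axis-aligned, nonempty) rectangle in the lattice. -/
def IsRect {d n : ℕ} (R : Set (Grid d n)) : Prop :=
  R.Nonempty ∧ ∃ a b : Fin d → Fin n, R = {x | ∀ i, a i ≤ x i ∧ x i ≤ b i}

/-- A rectangular partition of the lattice. -/
def IsPartition {d n : ℕ} (P : Finset (Set (Grid d n))) : Prop :=
  (∀ R ∈ P, IsRect R) ∧ (∀ R ∈ P, ∀ R' ∈ P, R ≠ R' → Disjoint R R') ∧
    (⋃ R ∈ P, R) = Set.univ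

/-- A hierarchical split of the rectangle `R` into `R₁` and `R₂`. -/
def IsHierSplit {d n : ℕ} (R R₁ R₂ : Set (Grid d n)) : Prop :=
  ∃ (j : Fin d) (ℓ : Fin n),
    R₁ = {x ∈ R | x j ≤ ℓ} ∧ R₂ = {x ∈ R | ℓ < x j} ∧ R₁.Nonempty ∧ R₂.Nonempty

/-- A dyadic split (split at the midpoint) of the rectangle `R` into `R₁` and `R₂`. -/
def IsDyadicSplit {d n : ℕ} (R R₁ R₂ : Set (Grid d n)) : Prop :=
  ∃ (a b : Fin d → Fin n) (j : Fin d),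
    (∀ i, a i ≤ b i) ∧ a j < b j ∧
    R = {x | ∀ i, a i ≤ x i ∧ x i ≤ b i} ∧
    R₁ = {x ∈ R | (x j : ℕ) ≤ (a j : ℕ) + ((b j : ℕ) - (a j : ℕ)) / 2} ∧
    R₂ = R \ R₁

/-- Hierarchical partitions: partitions reachable from the trivial partition by
finitely many hierarchical splits. -/
inductive IsHierPartition (d n : ℕ) : Finset (Set (Grid d n)) → Prop where
  | triv : IsHierPartition d n {Set.univ}
  | split (P : Finset (Set (Grid d n))) (R R₁ R₂ : Set (Grid d n)) :
      IsHierPartition d n P → R ∈ P → IsHierSplit R R₁ R₂ →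
      IsHierPartition d n (insert R₁ (insert R₂ (P.erase R)))

/-- Recursive dyadic partitions: partitions reachable from the trivial partition by
finitely many dyadic splits. -/
inductive IsRDPPartition (d n : ℕ) : Finset (Set (Grid d n)) → Prop where
  | triv : IsRDPPartition d n {Set.univ}
  | split (P : Finset (Set (Grid d n))) (R R₁ R₂ : Set (Grid d n)) :
      IsRDPPartition d n P → R ∈ P → IsDyadicSplit R R₁ R₂ →
      IsRDPPartition d n (insert R₁ (insert R₂ (P.erase R)))

/-- `θ` is a discrete polynomial of total degree at most `r` on the rectangle `R`. -/
def IsPolyOn {d n : ℕ} (r : ℕ) (θ : Grid d n → ℝ) (R : Set (Grid d n)) : Prop :=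
  ∃ f : MvPolynomial (Fin d) ℝ, f.totalDegree ≤ r ∧
    ∀ x ∈ R, θ x = MvPolynomial.eval (fun i => (((x i : ℕ) : ℝ) + 1) / n) f

/-- `k^(r)_all(θ)`. -/
def kAll {d n : ℕ} (r : ℕ) (θ : Grid d n → ℝ) : ℕ :=
  sInf {k | ∃ P : Finset (Set (Grid d n)),
    IsPartition P ∧ (∀ R ∈ P, IsPolyOn r θ R) ∧ P.card = k}

/-- `k^(r)_hier(θ)`. -/
def kHier {d n : ℕ} (r : ℕ) (θ : Grid d n → ℝ) : ℕ :=
  sInf {k | ∃ P : Finset (Set (Grid d n)),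
    IsHierPartition d n P ∧ (∀ R ∈ P, IsPolyOn r θ R) ∧ P.card = k}

/-- `k^(r)_rdp(θ)`. -/
def kRdp {d n : ℕ} (r : ℕ) (θ : Grid d n → ℝ) : ℕ :=
  sInf {k | ∃ P : Finset (Set (Grid d n)),
    IsRDPPartition d n P ∧ (∀ R ∈ P, IsPolyOn r θ R) ∧ P.card = k}


end


namespace Statement10Aux


/-- `[lo, hi]` (inclusive, 0-indexed) is a dyadic interval of `{0,…,n-1}`. -/
def Dy (n lo hi : ℕ) : Prop :=
  ∃ s a : ℕ, 1 ≤ a ∧ a * 2 ^ s ≤ n ∧ lo = (a - 1) * 2 ^ s ∧ hi = a * 2 ^ s - 1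

lemma nat_div_eq_iff {b : ℕ} (hb : 0 < b) (t c : ℕ) :
    t / b = c ↔ c * b ≤ t ∧ t < (c + 1) * b := by
  rw [show (t / b = c) ↔ (c ≤ t / b ∧ t / b < c + 1) from by omega,
    Nat.le_div_iff_mul_le hb, Nat.div_lt_iff_lt_mul hb]

lemma Dy.le {n lo hi : ℕ} (h : Dy n lo hi) : lo ≤ hi := by
  obtain ⟨s, a, ha, hn, hl, hh⟩ := h
  obtain ⟨a', rfl⟩ : ∃ a', a = a' + 1 := ⟨a - 1, by omega⟩
  have h2 : 1 ≤ 2 ^ s := Nat.one_le_two_pow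
  have e : (a' + 1) * 2 ^ s = a' * 2 ^ s + 2 ^ s := by ring
  simp only [Nat.add_sub_cancel] at hl
  omega

lemma Dy.lt_n {n lo hi : ℕ} (h : Dy n lo hi) : hi < n := by
  obtain ⟨s, a, ha, hn, hl, hh⟩ := h
  have h2 : 1 ≤ 2 ^ s := Nat.one_le_two_pow
  have : 1 ≤ a * 2 ^ s := Nat.one_le_iff_ne_zero.2 (by positivity)
  omega

lemma dy_mem_iff {lo hi : ℕ} {s a : ℕ} (ha : 1 ≤ a)
    (hl : lo = (a - 1) * 2 ^ s) (hh : hi = a * 2 ^ s - 1) (t : ℕ) :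
    (lo ≤ t ∧ t ≤ hi) ↔ t / 2 ^ s = a - 1 := by
  obtain ⟨a', rfl⟩ : ∃ a', a = a' + 1 := ⟨a - 1, by omega⟩
  have h2 : 0 < 2 ^ s := Nat.pow_pos (by norm_num)
  have e : (a' + 1) * 2 ^ s = a' * 2 ^ s + 2 ^ s := by ring
  simp only [Nat.add_sub_cancel] at hl ⊢
  rw [nat_div_eq_iff h2]
  omega

lemma dy_nested {n l1 h1 l2 h2 : ℕ} (d1 : Dy n l1 h1) (d2 : Dy n l2 h2)
    (hmeet : l2 ≤ h1 ∧ l1 ≤ h2) :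
    (l2 ≤ l1 ∧ h1 ≤ h2) ∨ (l1 ≤ l2 ∧ h2 ≤ h1) := by
  have hle1 := d1.le
  have hle2 := d2.le
  obtain ⟨s, a, ha, hn, hl, hh⟩ := d1
  obtain ⟨t, b, hb, hn', hl', hh'⟩ := d2
  set x := max l1 l2 with hx
  have hx1 : l1 ≤ x ∧ x ≤ h1 := ⟨le_max_left _ _, by omega⟩
  have hx2 : l2 ≤ x ∧ x ≤ h2 := ⟨le_max_right _ _, by omega⟩
  have key : ∀ u v c d : ℕ, u ≤ v →
      x / 2 ^ u = c → x / 2 ^ v = d →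
      ∀ y, y / 2 ^ u = c → y / 2 ^ v = d := by
    intro u v c d huv hxu hxv y hyu
    have hsplit : 2 ^ u * 2 ^ (v - u) = 2 ^ v := by
      rw [← pow_add]; congr 1; omega
    have e1 : y / 2 ^ v = (y / 2 ^ u) / 2 ^ (v - u) := by
      rw [Nat.div_div_eq_div_mul, hsplit]
    have e2 : x / 2 ^ v = (x / 2 ^ u) / 2 ^ (v - u) := by
      rw [Nat.div_div_eq_div_mul, hsplit]
    rw [e1, hyu, ← hxu, ← e2, hxv]
  rcases le_total s t with hst | hst
  · left
    have hsub : ∀ y, (l1 ≤ y ∧ y ≤ h1) → (l2 ≤ y ∧ y ≤ h2) := by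
      intro y hy
      rw [dy_mem_iff ha hl hh] at hy
      have hx1' := (dy_mem_iff ha hl hh x).1 hx1
      have hx2' := (dy_mem_iff hb hl' hh' x).1 hx2
      rw [dy_mem_iff hb hl' hh']
      exact key s t _ _ hst hx1' hx2' y hy
    have e1 := hsub l1 ⟨le_rfl, hle1⟩
    have e2 := hsub h1 ⟨hle1, le_rfl⟩
    omega
  · right
    have hsub : ∀ y, (l2 ≤ y ∧ y ≤ h2) → (l1 ≤ y ∧ y ≤ h1) := by
      intro y hy
      rw [dy_mem_iff hb hl' hh'] at hy
      have hx1' := (dy_mem_iff ha hl hh x).1 hx1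
      have hx2' := (dy_mem_iff hb hl' hh' x).1 hx2
      rw [dy_mem_iff ha hl hh]
      exact key t s _ _ hst hx2' hx1' y hy
    have e1 := hsub l2 ⟨le_rfl, hle2⟩
    have e2 := hsub h2 ⟨hle2, le_rfl⟩
    omega

/-- the two dyadic halves of a nontrivial dyadic interval -/
lemma dy_halves {n lo hi : ℕ} (d : Dy n lo hi) (hlt : lo < hi) :
    Dy n lo (lo + (hi - lo) / 2) ∧ Dy n (lo + (hi - lo) / 2 + 1) hi ∧
      lo + (hi - lo) / 2 < hi := by
  obtain ⟨s, a, ha, hn, hl, hh⟩ := d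
  obtain ⟨a', rfl⟩ : ∃ a', a = a' + 1 := ⟨a - 1, by omega⟩
  simp only [Nat.add_sub_cancel] at hl
  have hs : s ≠ 0 := by
    rintro rfl
    have e : (a' + 1) * 2 ^ 0 = a' * 2 ^ 0 + 1 := by ring
    omega
  obtain ⟨s', rfl⟩ : ∃ s', s = s' + 1 := ⟨s - 1, by omega⟩
  have h2' : 1 ≤ 2 ^ s' := Nat.one_le_two_pow
  have E1 : a' * 2 ^ (s' + 1) = 2 * (a' * 2 ^ s') := by rw [pow_succ]; ring
  have E2 : (a' + 1) * 2 ^ (s' + 1) = 2 * (a' * 2 ^ s') + 2 * 2 ^ s' := by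
    rw [pow_succ]; ring
  have E3 : (2 * a' + 1) * 2 ^ s' = 2 * (a' * 2 ^ s') + 2 ^ s' := by ring
  have E4 : (2 * a' + 2) * 2 ^ s' = 2 * (a' * 2 ^ s') + 2 * 2 ^ s' := by ring
  have E5 : (2 * a') * 2 ^ s' = 2 * (a' * 2 ^ s') := by ring
  refine ⟨⟨s', 2 * a' + 1, by omega, by omega, ?_, by omega⟩,
    ⟨s', 2 * a' + 2, by omega, by omega, ?_, by omega⟩, by omega⟩
  · rw [show 2 * a' + 1 - 1 = 2 * a' from by omega]; omega
  · rw [show 2 * a' + 2 - 1 = 2 * a' + 1 from by omega]; omega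

/-- a dyadic interval meeting both halves of a nontrivial dyadic interval,
and contained in it, must be the whole interval. -/
lemma dy_cross {n lo hi l h : ℕ} (d : Dy n lo hi) (hlt : lo < hi)
    (dj : Dy n l h) (hsub : lo ≤ l ∧ h ≤ hi)
    (hm : l ≤ lo + (hi - lo) / 2 ∧ lo + (hi - lo) / 2 < h) :
    l = lo ∧ h = hi := by
  obtain ⟨dl, dr, hmidlt⟩ := dy_halves d hlt
  have hjl := dy_nested dj dl ⟨by omega, by omega⟩
  have hjr := dy_nested dj dr ⟨by omega, by omega⟩
  have := dj.le
  constructor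
  · rcases hjl with ⟨h1, h2⟩ | ⟨h1, h2⟩ <;> omega
  · rcases hjr with ⟨h1, h2⟩ | ⟨h1, h2⟩ <;> omega


section SetLayer

variable {n : ℕ}

/-- interval of `Fin n` with endpoints `lo ≤ hi` (inclusive). -/
def iv (n lo hi : ℕ) : Set (Fin n) := {x | lo ≤ (x : ℕ) ∧ (x : ℕ) ≤ hi}

/-- product of two intervals, as a rectangle in the grid. -/
def pr (n l0 h0 l1 h1 : ℕ) : Set (Grid 2 n) :=
  {x | x 0 ∈ iv n l0 h0 ∧ x 1 ∈ iv n l1 h1}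

lemma mem_pr {l0 h0 l1 h1 : ℕ} {x : Grid 2 n} :
    x ∈ pr n l0 h0 l1 h1 ↔
      (l0 ≤ (x 0 : ℕ) ∧ (x 0 : ℕ) ≤ h0) ∧ (l1 ≤ (x 1 : ℕ) ∧ (x 1 : ℕ) ≤ h1) :=
  Iff.rfl

/-- a corner point of the grid -/
def pt (n u v : ℕ) (hu : u < n) (hv : v < n) : Grid 2 n := ![⟨u, hu⟩, ⟨v, hv⟩]

@[simp] lemma pt_app0 {u v : ℕ} (hu : u < n) (hv : v < n) :
    ((pt n u v hu hv) 0 : ℕ) = u := rfl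

@[simp] lemma pt_app1 {u v : ℕ} (hu : u < n) (hv : v < n) :
    ((pt n u v hu hv) 1 : ℕ) = v := rfl

lemma pt_mem {l0 h0 l1 h1 u v : ℕ} (hu : u < n) (hv : v < n)
    (c1 : l0 ≤ u) (c2 : u ≤ h0) (c3 : l1 ≤ v) (c4 : v ≤ h1) :
    pt n u v hu hv ∈ pr n l0 h0 l1 h1 := by
  rw [mem_pr, pt_app0, pt_app1]
  exact ⟨⟨c1, c2⟩, ⟨c3, c4⟩⟩

lemma pr_nonempty {l0 h0 l1 h1 : ℕ} (d0 : Dy n l0 h0) (d1 : Dy n l1 h1) :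
    (pr n l0 h0 l1 h1).Nonempty := by
  refine ⟨pt n l0 l1 (lt_of_le_of_lt d0.le d0.lt_n) (lt_of_le_of_lt d1.le d1.lt_n), ?_⟩
  exact pt_mem _ _ le_rfl d0.le le_rfl d1.le

lemma pr_subset {l0 h0 l1 h1 m0 g0 m1 g1 : ℕ}
    (hv : l0 ≤ h0 ∧ h0 < n ∧ l1 ≤ h1 ∧ h1 < n)
    (h : pr n l0 h0 l1 h1 ⊆ pr n m0 g0 m1 g1) :
    m0 ≤ l0 ∧ h0 ≤ g0 ∧ m1 ≤ l1 ∧ h1 ≤ g1 := by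
  obtain ⟨a1, a2, a3, a4⟩ := hv
  have c1 := h (pt_mem (u := l0) (v := l1) (by omega) (by omega) le_rfl a1 le_rfl a3)
  have c2 := h (pt_mem (u := h0) (v := h1) (by omega) (by omega) a1 le_rfl a3 le_rfl)
  rw [mem_pr, pt_app0, pt_app1] at c1 c2
  omega

lemma pr_inj {l0 h0 l1 h1 m0 g0 m1 g1 : ℕ}
    (hv : l0 ≤ h0 ∧ h0 < n ∧ l1 ≤ h1 ∧ h1 < n)
    (hv' : m0 ≤ g0 ∧ g0 < n ∧ m1 ≤ g1 ∧ g1 < n)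
    (h : pr n l0 h0 l1 h1 = pr n m0 g0 m1 g1) :
    l0 = m0 ∧ h0 = g0 ∧ l1 = m1 ∧ h1 = g1 := by
  have s1 := pr_subset hv h.subset
  have s2 := pr_subset hv' h.superset
  omega

/-- `R` is a product of two dyadic intervals. -/
def DyP (n : ℕ) (R : Set (Grid 2 n)) : Prop :=
  ∃ l0 h0 l1 h1 : ℕ, Dy n l0 h0 ∧ Dy n l1 h1 ∧ R = pr n l0 h0 l1 h1

lemma DyP.nonempty {R : Set (Grid 2 n)} (h : DyP n R) : R.Nonempty := by
  obtain ⟨l0, h0, l1, h1, d0, d1, rfl⟩ := h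
  exact pr_nonempty d0 d1

/-- dyadic split of a dyadic rectangle along coordinate 0 -/
lemma split0 {l0 h0 l1 h1 : ℕ} (d0 : Dy n l0 h0) (d1 : Dy n l1 h1) (hlt : l0 < h0) :
    IsDyadicSplit (pr n l0 h0 l1 h1) (pr n l0 (l0 + (h0 - l0) / 2) l1 h1)
      (pr n (l0 + (h0 - l0) / 2 + 1) h0 l1 h1) := by
  have h0n := d0.lt_n; have h1n := d1.lt_n
  have hle0 := d0.le; have hle1 := d1.le
  refine ⟨![⟨l0, by omega⟩, ⟨l1, by omega⟩], ![⟨h0, h0n⟩, ⟨h1, h1n⟩], 0, ?_, ?_, ?_, ?_, ?_⟩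
  · intro i
    fin_cases i <;> simp [Fin.le_def] <;> omega
  · show ((⟨_, _⟩ : Fin n) < (⟨_, _⟩ : Fin n))
    rw [Fin.mk_lt_mk]
    omega
  · ext x
    simp only [mem_pr, Set.mem_setOf_eq, Fin.forall_fin_two, Fin.le_def,
      Matrix.cons_val_zero, Matrix.cons_val_one, Matrix.head_cons, iv] <;> tauto
  · ext x
    simp [mem_pr, iv, Set.mem_setOf_eq, Matrix.cons_val_zero, Matrix.cons_val_one,
      Matrix.head_cons, Fin.lt_def, Fin.le_def] <;> omega
  · ext x
    simp [mem_pr, iv, Set.mem_diff, Set.mem_setOf_eq, Matrix.cons_val_zero,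
      Matrix.cons_val_one, Matrix.head_cons, Fin.lt_def, Fin.le_def] <;> omega

/-- dyadic split of a dyadic rectangle along coordinate 1 -/
lemma split1 {l0 h0 l1 h1 : ℕ} (d0 : Dy n l0 h0) (d1 : Dy n l1 h1) (hlt : l1 < h1) :
    IsDyadicSplit (pr n l0 h0 l1 h1) (pr n l0 h0 l1 (l1 + (h1 - l1) / 2))
      (pr n l0 h0 (l1 + (h1 - l1) / 2 + 1) h1) := by
  have h0n := d0.lt_n; have h1n := d1.lt_n
  have hle0 := d0.le; have hle1 := d1.le
  refine ⟨![⟨l0, by omega⟩, ⟨l1, by omega⟩], ![⟨h0, h0n⟩, ⟨h1, h1n⟩], 1, ?_, ?_, ?_, ?_, ?_⟩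
  · intro i
    fin_cases i <;> simp [Fin.le_def] <;> omega
  · show ((⟨_, _⟩ : Fin n) < (⟨_, _⟩ : Fin n))
    rw [Fin.mk_lt_mk]
    omega
  · ext x
    simp only [mem_pr, Set.mem_setOf_eq, Fin.forall_fin_two, Fin.le_def,
      Matrix.cons_val_zero, Matrix.cons_val_one, Matrix.head_cons, iv] <;> tauto
  · ext x
    simp [mem_pr, iv, Set.mem_setOf_eq, Matrix.cons_val_zero, Matrix.cons_val_one,
      Matrix.head_cons, Fin.lt_def, Fin.le_def] <;> omega
  · ext x
    simp [mem_pr, iv, Set.mem_diff, Set.mem_setOf_eq, Matrix.cons_val_zero,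
      Matrix.cons_val_one, Matrix.head_cons, Fin.lt_def, Fin.le_def] <;> omega

/-- a dyadic split of a product of dyadic intervals yields products of dyadic
intervals. -/
lemma split_preserves {R R₁ R₂ : Set (Grid 2 n)} (hR : DyP n R)
    (hsp : IsDyadicSplit R R₁ R₂) : DyP n R₁ ∧ DyP n R₂ := by
  obtain ⟨l0, h0, l1, h1, d0, d1, rfl⟩ := hR
  obtain ⟨a, b, j, hab, hj, hbox, h1e, h2e⟩ := hsp
  have hboxpr : pr n l0 h0 l1 h1 = pr n (a 0) (b 0) (a 1) (b 1) := by
    rw [hbox]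
    ext x
    simp only [mem_pr, Set.mem_setOf_eq, Fin.forall_fin_two, Fin.le_def, iv] <;> tauto
  have hv : (l0 : ℕ) ≤ h0 ∧ h0 < n ∧ l1 ≤ h1 ∧ h1 < n :=
    ⟨d0.le, d0.lt_n, d1.le, d1.lt_n⟩
  have hv' : ((a 0 : ℕ) ≤ (b 0 : ℕ)) ∧ (b 0 : ℕ) < n ∧ (a 1 : ℕ) ≤ (b 1 : ℕ) ∧ (b 1 : ℕ) < n :=
    ⟨hab 0, (b 0).isLt, hab 1, (b 1).isLt⟩
  obtain ⟨e0, e1, e2, e3⟩ := pr_inj hv hv' hboxpr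
  rw [Fin.lt_def] at hj
  fin_cases j
  · have hlt : l0 < h0 := by simpa [← e0, ← e1] using hj
    obtain ⟨dl, dr, hm⟩ := dy_halves d0 hlt
    constructor
    · refine ⟨l0, l0 + (h0 - l0) / 2, l1, h1, dl, d1, ?_⟩
      rw [h1e]
      ext x
      simp [mem_pr, iv, Set.mem_setOf_eq] <;> omega
    · refine ⟨l0 + (h0 - l0) / 2 + 1, h0, l1, h1, dr, d1, ?_⟩
      rw [h2e, h1e]
      ext x
      simp [mem_pr, iv, Set.mem_diff, Set.mem_setOf_eq] <;> omega
  · have hlt : l1 < h1 := by simpa [← e2, ← e3] using hj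
    obtain ⟨dl, dr, hm⟩ := dy_halves d1 hlt
    constructor
    · refine ⟨l0, h0, l1, l1 + (h1 - l1) / 2, d0, dl, ?_⟩
      rw [h1e]
      ext x
      simp [mem_pr, iv, Set.mem_setOf_eq] <;> omega
    · refine ⟨l0, h0, l1 + (h1 - l1) / 2 + 1, h1, d0, dr, ?_⟩
      rw [h2e, h1e]
      ext x
      simp [mem_pr, iv, Set.mem_diff, Set.mem_setOf_eq] <;> omega

/-- RDP partitions consist of nonempty, pairwise disjoint pieces. -/
lemma rdp_inv {d : ℕ} (hn : 0 < n) {Q : Finset (Set (Grid d n))}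
    (h : IsRDPPartition d n Q) :
    (∀ S ∈ Q, S.Nonempty) ∧ ∀ S ∈ Q, ∀ T ∈ Q, S ≠ T → Disjoint S T := by
  induction h with
  | triv =>
    constructor
    · intro S hS
      rw [Finset.mem_singleton] at hS
      subst hS
      exact ⟨fun _ => ⟨0, hn⟩, trivial⟩
    · intro S hS T hT hne
      rw [Finset.mem_singleton] at hS hT
      exact absurd (hS.trans hT.symm) hne
  | split P R R₁ R₂ hP hmem hsp ih =>
    obtain ⟨a, b, j, hab, hj, hbox, h1e, h2e⟩ := hsp
    rw [Fin.lt_def] at hj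
    have hR1R : R₁ ⊆ R := by rw [h1e]; exact fun x hx => hx.1
    have hR2R : R₂ ⊆ R := by rw [h2e]; exact Set.diff_subset
    have hR1ne : R₁.Nonempty := by
      refine ⟨a, ?_⟩
      rw [h1e]
      exact ⟨by rw [hbox]; exact fun i => ⟨le_rfl, hab i⟩, Nat.le_add_right _ _⟩
    have hR2ne : R₂.Nonempty := by
      refine ⟨b, ?_⟩
      rw [h2e]
      refine ⟨by rw [hbox]; exact fun i => ⟨hab i, le_rfl⟩, ?_⟩
      rw [h1e]
      intro hb
      have := hb.2
      omega
    have hdis12 : Disjoint R₁ R₂ := by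
      rw [h2e]
      exact Set.disjoint_sdiff_right
    have hdisR : ∀ S ∈ P.erase R, Disjoint S R := fun S hS =>
      ih.2 S (Finset.mem_of_mem_erase hS) R hmem (Finset.ne_of_mem_erase hS)
    constructor
    · intro S hS
      rcases Finset.mem_insert.1 hS with rfl | hS
      · exact hR1ne
      rcases Finset.mem_insert.1 hS with rfl | hS
      · exact hR2ne
      · exact ih.1 S (Finset.mem_of_mem_erase hS)
    · intro S hS T hT hne
      have key : ∀ U, U ∈ P.erase R → Disjoint U R₁ ∧ Disjoint U R₂ := by
        intro U hU
        exact ⟨(hdisR U hU).mono_right hR1R, (hdisR U hU).mono_right hR2R⟩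
      rcases Finset.mem_insert.1 hS with rfl | hS
      · rcases Finset.mem_insert.1 hT with rfl | hT
        · exact absurd rfl hne
        · rcases Finset.mem_insert.1 hT with rfl | hT
          · exact hdis12
          · exact ((key T hT).1).symm
      · rcases Finset.mem_insert.1 hS with rfl | hS
        · rcases Finset.mem_insert.1 hT with rfl | hT
          · exact hdis12.symm
          · rcases Finset.mem_insert.1 hT with rfl | hT
            · exact absurd rfl hne
            · exact ((key T hT).2).symm
        · rcases Finset.mem_insert.1 hT with h | hT
          · rw [h]; exact (key S hS).1
          · rcases Finset.mem_insert.1 hT with h | hT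
            · rw [h]; exact (key S hS).2
            · exact ih.2 S (Finset.mem_of_mem_erase hS) T
                (Finset.mem_of_mem_erase hT) hne

/-- every piece of an RDP partition is a product of dyadic intervals. -/
lemma rdp_forward {k : ℕ} (hk : 1 ≤ k) (hn : n = 2 ^ k)
    {Q : Finset (Set (Grid 2 n))} (h : IsRDPPartition 2 n Q) :
    ∀ R ∈ Q, DyP n R := by
  have hn1 : 1 ≤ n := by rw [hn]; exact Nat.one_le_two_pow
  induction h with
  | triv =>
    intro R hR
    rw [Finset.mem_singleton] at hR
    subst hR
    refine ⟨0, n - 1, 0, n - 1, ⟨k, 1, le_rfl, by omega, by simp, by omega⟩,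
      ⟨k, 1, le_rfl, by omega, by simp, by omega⟩, ?_⟩
    ext x
    simp only [Set.mem_univ, mem_pr, true_iff]
    have := (x 0).isLt
    have := (x 1).isLt
    omega
  | split P R R₁ R₂ hP hmem hsp ih =>
    intro S hS
    have hRdy := ih R hmem
    rcases Finset.mem_insert.1 hS with rfl | hS
    · exact (split_preserves hRdy hsp).1
    rcases Finset.mem_insert.1 hS with rfl | hS
    · exact (split_preserves hRdy hsp).2
    · exact ih S (Finset.mem_of_mem_erase hS)

/-- choosing a coordinate along which to split: no piece crosses the midline. -/
lemma choose_coord {P : Finset (Set (Grid 2 n))} {l0 h0 l1 h1 : ℕ}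
    (d0 : Dy n l0 h0) (d1 : Dy n l1 h1)
    (hdyp : ∀ S ∈ P, DyP n S)
    (hdisj : ∀ S ∈ P, ∀ T ∈ P, S ≠ T → Disjoint S T)
    (huni : (⋃ S ∈ P, S) = pr n l0 h0 l1 h1) (hcard : 2 ≤ P.card) :
    (l0 < h0 ∧ ∀ S ∈ P, S ⊆ pr n l0 (l0 + (h0 - l0) / 2) l1 h1 ∨
        S ⊆ pr n (l0 + (h0 - l0) / 2 + 1) h0 l1 h1) ∨
    (l1 < h1 ∧ ∀ S ∈ P, S ⊆ pr n l0 h0 l1 (l1 + (h1 - l1) / 2) ∨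
        S ⊆ pr n l0 h0 (l1 + (h1 - l1) / 2 + 1) h1) := by
  have hsubR : ∀ S ∈ P, S ⊆ pr n l0 h0 l1 h1 := by
    intro S hS x hx
    rw [← huni]
    exact Set.mem_biUnion hS hx
  have hne_top : ∀ S ∈ P, S ≠ pr n l0 h0 l1 h1 := by
    intro S hS hSR
    obtain ⟨T, hT, hTS⟩ := Finset.exists_mem_ne (s := P) (by omega) S
    obtain ⟨x, hx⟩ := (hdyp T hT).nonempty
    exact Set.disjoint_left.1 (hdisj T hT S hS hTS) hx (hSR ▸ hsubR T hT hx)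
  have piece : ∀ S ∈ P, ∃ m0 g0 m1 g1 : ℕ, Dy n m0 g0 ∧ Dy n m1 g1 ∧
      S = pr n m0 g0 m1 g1 ∧ l0 ≤ m0 ∧ g0 ≤ h0 ∧ l1 ≤ m1 ∧ g1 ≤ h1 := by
    intro S hS
    obtain ⟨m0, g0, m1, g1, e0, e1, rfl⟩ := hdyp S hS
    have hb := pr_subset ⟨e0.le, e0.lt_n, e1.le, e1.lt_n⟩ (hsubR _ hS)
    exact ⟨m0, g0, m1, g1, e0, e1, rfl, by omega, by omega, by omega, by omega⟩
  by_cases hf0 : ∃ S ∈ P, ∃ m1 g1 : ℕ, Dy n m1 g1 ∧ S = pr n l0 h0 m1 g1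
  · by_cases hf1 : ∃ S ∈ P, ∃ m0 g0 : ℕ, Dy n m0 g0 ∧ S = pr n m0 g0 l1 h1
    · exfalso
      obtain ⟨A, hA, a1, b1, dA, hAe⟩ := hf0
      obtain ⟨B, hB, a0, b0, dB, hBe⟩ := hf1
      have hvA : (l0 : ℕ) ≤ h0 ∧ h0 < n ∧ a1 ≤ b1 ∧ b1 < n :=
        ⟨d0.le, d0.lt_n, dA.le, dA.lt_n⟩
      have hvB : (a0 : ℕ) ≤ b0 ∧ b0 < n ∧ l1 ≤ h1 ∧ h1 < n :=
        ⟨dB.le, dB.lt_n, d1.le, d1.lt_n⟩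
      have hAsub := pr_subset hvA (hAe ▸ hsubR A hA)
      have hBsub := pr_subset hvB (hBe ▸ hsubR B hB)
      have ha0n : a0 < n := by omega
      have ha1n : a1 < n := by omega
      have hp : pt n a0 a1 ha0n ha1n ∈ A := by
        rw [hAe]
        exact pt_mem _ _ (by omega) (by omega) le_rfl dA.le
      have hq : pt n a0 a1 ha0n ha1n ∈ B := by
        rw [hBe]
        exact pt_mem _ _ le_rfl dB.le (by omega) (by omega)
      by_cases hAB : A = B
      · subst hAB
        rw [hBe] at hAe
        obtain ⟨e1, e2, e3, e4⟩ := pr_inj hvB hvA hAe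
        exact hne_top A hA (by rw [hBe, e1, e2])
      · exact Set.disjoint_left.1 (hdisj A hA B hB hAB) hp hq
    · right
      push_neg at hf1
      have hPne : P.Nonempty := Finset.card_pos.1 (by omega)
      have hnotfull : ∀ S ∈ P, ∀ m0 g0 m1 g1 : ℕ, Dy n m0 g0 → Dy n m1 g1 →
          S = pr n m0 g0 m1 g1 → ¬(m1 = l1 ∧ g1 = h1) := by
        rintro S hS m0 g0 m1 g1 e0 e1 rfl ⟨rfl, rfl⟩
        exact hf1 _ hS m0 g0 e0 rfl
      have hlt : l1 < h1 := by
        obtain ⟨S, hS⟩ := hPne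
        obtain ⟨m0, g0, m1, g1, e0, e1, eS, b0, b1, b2, b3⟩ := piece S hS
        have := e1.le
        have := hnotfull S hS m0 g0 m1 g1 e0 e1 eS
        omega
      refine ⟨hlt, ?_⟩
      intro S hS
      obtain ⟨m0, g0, m1, g1, e0, e1, eS, b0, b1, b2, b3⟩ := piece S hS
      have hgle := e1.le
      by_cases hg : g1 ≤ l1 + (h1 - l1) / 2
      · left
        rw [eS]
        intro x hx
        rw [mem_pr] at hx ⊢
        omega
      · by_cases hm : l1 + (h1 - l1) / 2 < m1
        · right
          rw [eS]
          intro x hx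
          rw [mem_pr] at hx ⊢
          omega
        · exfalso
          have := dy_cross d1 hlt e1 ⟨b2, b3⟩ ⟨by omega, by omega⟩
          exact hnotfull S hS m0 g0 m1 g1 e0 e1 eS this
  · left
    push_neg at hf0
    have hPne : P.Nonempty := Finset.card_pos.1 (by omega)
    have hnotfull : ∀ S ∈ P, ∀ m0 g0 m1 g1 : ℕ, Dy n m0 g0 → Dy n m1 g1 →
        S = pr n m0 g0 m1 g1 → ¬(m0 = l0 ∧ g0 = h0) := by
      rintro S hS m0 g0 m1 g1 e0 e1 rfl ⟨rfl, rfl⟩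
      exact hf0 _ hS m1 g1 e1 rfl
    have hlt : l0 < h0 := by
      obtain ⟨S, hS⟩ := hPne
      obtain ⟨m0, g0, m1, g1, e0, e1, eS, b0, b1, b2, b3⟩ := piece S hS
      have := e0.le
      have := hnotfull S hS m0 g0 m1 g1 e0 e1 eS
      omega
    refine ⟨hlt, ?_⟩
    intro S hS
    obtain ⟨m0, g0, m1, g1, e0, e1, eS, b0, b1, b2, b3⟩ := piece S hS
    have hgle := e0.le
    by_cases hg : g0 ≤ l0 + (h0 - l0) / 2
    · left
      rw [eS]
      intro x hx
      rw [mem_pr] at hx ⊢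
      omega
    · by_cases hm : l0 + (h0 - l0) / 2 < m0
      · right
        rw [eS]
        intro x hx
        rw [mem_pr] at hx ⊢
        omega
      · exfalso
        have := dy_cross d0 hlt e0 ⟨b0, b1⟩ ⟨by omega, by omega⟩
        exact hnotfull S hS m0 g0 m1 g1 e0 e1 eS this


lemma pr_halves0 {l0 h0 l1 h1 : ℕ} (hlt : l0 < h0) :
    pr n l0 (l0 + (h0 - l0) / 2) l1 h1 ⊆ pr n l0 h0 l1 h1 ∧
    pr n (l0 + (h0 - l0) / 2 + 1) h0 l1 h1 ⊆ pr n l0 h0 l1 h1 ∧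
    (∀ x ∈ pr n l0 (l0 + (h0 - l0) / 2) l1 h1,
        x ∉ pr n (l0 + (h0 - l0) / 2 + 1) h0 l1 h1) ∧
    (∀ x ∈ pr n l0 h0 l1 h1, x ∈ pr n l0 (l0 + (h0 - l0) / 2) l1 h1 ∨
        x ∈ pr n (l0 + (h0 - l0) / 2 + 1) h0 l1 h1) := by
  refine ⟨?_, ?_, ?_, ?_⟩ <;> intro x hx <;> rw [mem_pr] at hx <;>
    simp only [mem_pr] <;> omega

lemma pr_halves1 {l0 h0 l1 h1 : ℕ} (hlt : l1 < h1) :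
    pr n l0 h0 l1 (l1 + (h1 - l1) / 2) ⊆ pr n l0 h0 l1 h1 ∧
    pr n l0 h0 (l1 + (h1 - l1) / 2 + 1) h1 ⊆ pr n l0 h0 l1 h1 ∧
    (∀ x ∈ pr n l0 h0 l1 (l1 + (h1 - l1) / 2),
        x ∉ pr n l0 h0 (l1 + (h1 - l1) / 2 + 1) h1) ∧
    (∀ x ∈ pr n l0 h0 l1 h1, x ∈ pr n l0 h0 l1 (l1 + (h1 - l1) / 2) ∨
        x ∈ pr n l0 h0 (l1 + (h1 - l1) / 2 + 1) h1) := by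
  refine ⟨?_, ?_, ?_, ?_⟩ <;> intro x hx <;> rw [mem_pr] at hx <;>
    simp only [mem_pr] <;> omega

/-- core of the induction step of `glue`, for either coordinate. -/
lemma glue_core {m : ℕ} {P Q : Finset (Set (Grid 2 n))} {R R₁ R₂ : Set (Grid 2 n)}
    (IH : ∀ m' < m, ∀ (P Q : Finset (Set (Grid 2 n))), P.card = m' →
      ∀ R' : Set (Grid 2 n), DyP n R' →
      IsRDPPartition 2 n Q → R' ∈ Q →
      (∀ S ∈ P, DyP n S) → (∀ S ∈ P, ∀ T ∈ P, S ≠ T → Disjoint S T) →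
      (⋃ S ∈ P, S) = R' → IsRDPPartition 2 n (Q.erase R' ∪ P))
    (hcard : P.card = m) (hm : 2 ≤ m)
    (hQ : IsRDPPartition 2 n Q) (hin : R ∈ Q)
    (hdyp : ∀ S ∈ P, DyP n S) (hdisj : ∀ S ∈ P, ∀ T ∈ P, S ≠ T → Disjoint S T)
    (huni : (⋃ S ∈ P, S) = R)
    (hQnonempty : ∀ S ∈ Q, S.Nonempty)
    (hQdisj : ∀ S ∈ Q, ∀ T ∈ Q, S ≠ T → Disjoint S T)
    (hsp : IsDyadicSplit R R₁ R₂)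
    (hd1 : DyP n R₁) (hd2 : DyP n R₂)
    (sub1 : R₁ ⊆ R) (sub2 : R₂ ⊆ R)
    (dis12 : ∀ x ∈ R₁, x ∉ R₂)
    (cover : ∀ x ∈ R, x ∈ R₁ ∨ x ∈ R₂)
    (hhalf : ∀ S ∈ P, S ⊆ R₁ ∨ S ⊆ R₂) :
    IsRDPPartition 2 n (Q.erase R ∪ P) := by
  classical
  have hQ' : IsRDPPartition 2 n (insert R₁ (insert R₂ (Q.erase R))) :=
    .split Q R R₁ R₂ hQ hin hsp
  set P₁ := P.filter (fun S => S ⊆ R₁) with hP₁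
  set P₂ := P.filter (fun S => ¬ S ⊆ R₁) with hP₂
  have hsubP₁ : ∀ S ∈ P₁, S ⊆ R₁ := fun S hS => (Finset.mem_filter.1 hS).2
  have hsubP₂ : ∀ S ∈ P₂, S ⊆ R₂ := by
    intro S hS
    have h' := Finset.mem_filter.1 hS
    rcases hhalf S h'.1 with h | h
    · exact absurd h h'.2
    · exact h
  have hne1 := hd1.nonempty
  have hne2 := hd2.nonempty
  have huni1 : (⋃ S ∈ P₁, S) = R₁ := by
    apply Set.Subset.antisymm
    · exact Set.iUnion₂_subset hsubP₁
    · intro x hx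
      have hxR : x ∈ R := sub1 hx
      rw [← huni] at hxR
      obtain ⟨S, hS, hxS⟩ := Set.mem_iUnion₂.1 hxR
      by_cases hSR : S ⊆ R₁
      · exact Set.mem_biUnion (Finset.mem_filter.2 ⟨hS, hSR⟩) hxS
      · exact absurd ((hsubP₂ S (Finset.mem_filter.2 ⟨hS, hSR⟩)) hxS)
          (fun h => dis12 x hx h)
  have huni2 : (⋃ S ∈ P₂, S) = R₂ := by
    apply Set.Subset.antisymm
    · exact Set.iUnion₂_subset hsubP₂
    · intro x hx
      have hxR : x ∈ R := sub2 hx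
      rw [← huni] at hxR
      obtain ⟨S, hS, hxS⟩ := Set.mem_iUnion₂.1 hxR
      by_cases hSR : S ⊆ R₁
      · exact absurd (dis12 x (hSR hxS)) (fun h => h hx)
      · exact Set.mem_biUnion (Finset.mem_filter.2 ⟨hS, hSR⟩) hxS
  have hP₁ne : P₁.Nonempty := by
    obtain ⟨x, hx⟩ := hne1
    rw [← huni1] at hx
    obtain ⟨S, hS, _⟩ := Set.mem_iUnion₂.1 hx
    exact ⟨S, hS⟩
  have hP₂ne : P₂.Nonempty := by
    obtain ⟨x, hx⟩ := hne2
    rw [← huni2] at hx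
    obtain ⟨S, hS, _⟩ := Set.mem_iUnion₂.1 hx
    exact ⟨S, hS⟩
  have hcard1 : P₁.card < m := by
    rw [← hcard]
    apply Finset.card_lt_card
    refine ⟨Finset.filter_subset _ _, fun hsub => ?_⟩
    obtain ⟨T, hT⟩ := hP₂ne
    have hT' := Finset.mem_filter.1 hT
    exact hT'.2 (Finset.mem_filter.1 (hsub hT'.1)).2
  have hcard2 : P₂.card < m := by
    rw [← hcard]
    apply Finset.card_lt_card
    refine ⟨Finset.filter_subset _ _, fun hsub => ?_⟩
    obtain ⟨T, hT⟩ := hP₁ne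
    have hT' := Finset.mem_filter.1 hT
    exact (Finset.mem_filter.1 (hsub hT'.1)).2 hT'.2
  have hR1notQ : R₁ ∉ Q.erase R := by
    intro h
    obtain ⟨x, hx⟩ := hne1
    exact Set.disjoint_left.1
      (hQdisj R₁ (Finset.mem_of_mem_erase h) R hin (Finset.ne_of_mem_erase h)) hx (sub1 hx)
  have hR2notQ : R₂ ∉ Q.erase R := by
    intro h
    obtain ⟨x, hx⟩ := hne2
    exact Set.disjoint_left.1
      (hQdisj R₂ (Finset.mem_of_mem_erase h) R hin (Finset.ne_of_mem_erase h)) hx (sub2 hx)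
  have hR12 : R₁ ≠ R₂ := by
    intro e
    obtain ⟨x, hx⟩ := hne1
    exact dis12 x hx (e ▸ hx)
  have hdy1 : ∀ S ∈ P₁, DyP n S := fun S hS => hdyp S (Finset.filter_subset _ _ hS)
  have hdy2 : ∀ S ∈ P₂, DyP n S := fun S hS => hdyp S (Finset.filter_subset _ _ hS)
  have hdj1 : ∀ S ∈ P₁, ∀ T ∈ P₁, S ≠ T → Disjoint S T := fun S hS T hT =>
    hdisj S (Finset.filter_subset _ _ hS) T (Finset.filter_subset _ _ hT)
  have hdj2 : ∀ S ∈ P₂, ∀ T ∈ P₂, S ≠ T → Disjoint S T := fun S hS T hT =>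
    hdisj S (Finset.filter_subset _ _ hS) T (Finset.filter_subset _ _ hT)
  have hstep1 := IH P₁.card hcard1 P₁ (insert R₁ (insert R₂ (Q.erase R))) rfl R₁ hd1 hQ'
    (Finset.mem_insert_self _ _) hdy1 hdj1 huni1
  have hQ''eq : (insert R₁ (insert R₂ (Q.erase R))).erase R₁ = insert R₂ (Q.erase R) := by
    apply Finset.erase_insert
    simp only [Finset.mem_insert]
    rintro (h | h)
    · exact hR12 h
    · exact hR1notQ h
  rw [hQ''eq] at hstep1
  have hR2mem : R₂ ∈ insert R₂ (Q.erase R) ∪ P₁ :=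
    Finset.mem_union_left _ (Finset.mem_insert_self _ _)
  have hstep2 := IH P₂.card hcard2 P₂ (insert R₂ (Q.erase R) ∪ P₁) rfl R₂ hd2 hstep1
    hR2mem hdy2 hdj2 huni2
  have hR2P1 : R₂ ∉ P₁ := by
    intro h
    obtain ⟨x, hx⟩ := hne2
    exact dis12 x (hsubP₁ R₂ h hx) hx
  have hfinal : (insert R₂ (Q.erase R) ∪ P₁).erase R₂ ∪ P₂ = Q.erase R ∪ P := by
    rw [Finset.erase_union_distrib, Finset.erase_insert hR2notQ,
      Finset.erase_eq_of_notMem hR2P1, Finset.union_assoc,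
      Finset.filter_union_filter_not_eq]
  rw [hfinal] at hstep2
  exact hstep2

/-- the gluing lemma: replacing a dyadic rectangle of an RDP partition by any
partition of it into products of dyadic intervals again gives an RDP partition. -/
lemma glue (m : ℕ) :
    ∀ (P Q : Finset (Set (Grid 2 n))), P.card = m →
    ∀ R' : Set (Grid 2 n), DyP n R' →
    IsRDPPartition 2 n Q → R' ∈ Q →
    (∀ S ∈ P, DyP n S) → (∀ S ∈ P, ∀ T ∈ P, S ≠ T → Disjoint S T) →
    (⋃ S ∈ P, S) = R' →
    IsRDPPartition 2 n (Q.erase R' ∪ P) := by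
  induction m using Nat.strong_induction_on with
  | _ m IH =>
  intro P Q hcard R' hR' hQ hin hdyp hdisj huni
  classical
  obtain ⟨l0, h0, l1, h1, d0, d1, rfl⟩ := hR'
  have hn0 : 0 < n := by have := d0.lt_n; omega
  rcases Nat.lt_or_ge m 2 with hm | hm
  · interval_cases m
    · exfalso
      rw [Finset.card_eq_zero] at hcard
      subst hcard
      simp only [Finset.notMem_empty, Set.iUnion_of_empty, Set.iUnion_empty] at huni
      obtain ⟨x, hx⟩ := pr_nonempty d0 d1
      rw [← huni] at hx
      exact hx
    · obtain ⟨S, rfl⟩ := Finset.card_eq_one.1 hcard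
      simp only [Finset.mem_singleton, Set.iUnion_iUnion_eq_left] at huni
      subst huni
      have heq : Q.erase (pr n l0 h0 l1 h1) ∪ {pr n l0 h0 l1 h1} = Q := by
        ext T
        simp only [Finset.mem_union, Finset.mem_erase, Finset.mem_singleton]
        constructor
        · rintro (⟨_, hT⟩ | rfl)
          · exact hT
          · exact hin
        · intro hT
          by_cases hTe : T = pr n l0 h0 l1 h1
          · exact Or.inr hTe
          · exact Or.inl ⟨hTe, hT⟩
      rw [heq]
      exact hQ
  · have hQinv := rdp_inv hn0 hQ
    rcases choose_coord d0 d1 hdyp hdisj huni (hcard ▸ hm) with ⟨hlt, hhalf⟩ | ⟨hlt, hhalf⟩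
    · obtain ⟨dl, dr, hmlt⟩ := dy_halves d0 hlt
      obtain ⟨sub1, sub2, dis12, cover⟩ := pr_halves0 (n := n) (l1 := l1) (h1 := h1) hlt
      exact glue_core IH hcard hm hQ hin hdyp hdisj huni hQinv.1 hQinv.2
        (split0 d0 d1 hlt)
        ⟨l0, l0 + (h0 - l0) / 2, l1, h1, dl, d1, rfl⟩
        ⟨l0 + (h0 - l0) / 2 + 1, h0, l1, h1, dr, d1, rfl⟩
        sub1 sub2 dis12 cover hhalf
    · obtain ⟨dl, dr, hmlt⟩ := dy_halves d1 hlt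
      obtain ⟨sub1, sub2, dis12, cover⟩ := pr_halves1 (n := n) (l0 := l0) (h0 := h0) hlt
      exact glue_core IH hcard hm hQ hin hdyp hdisj huni hQinv.1 hQinv.2
        (split1 d0 d1 hlt)
        ⟨l0, h0, l1, l1 + (h1 - l1) / 2, d0, dl, rfl⟩
        ⟨l0, h0, l1 + (h1 - l1) / 2 + 1, h1, d0, dr, rfl⟩
        sub1 sub2 dis12 cover hhalf

end SetLayer

end Statement10Aux

/-- A rectangular partition of the planar lattice, `n = 2^k`, is a
recursive dyadic partition iff each of its rectangles is a product of two dyadic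
intervals. Lemma 8.2 of the paper. -/
theorem statement10 (k : ℕ) (hk : 1 ≤ k) (n : ℕ) (hn : n = 2 ^ k)
    (P : Finset (Set (Grid 2 n))) (hP : IsPartition P) :
    IsRDPPartition 2 n P ↔
      ∀ R ∈ P, ∃ I₀ I₁ : Set (Fin n),
        IsDyadicInterval n I₀ ∧ IsDyadicInterval n I₁ ∧
        R = {x : Grid 2 n | x 0 ∈ I₀ ∧ x 1 ∈ I₁} := by
  constructor
  · intro hrdp R hR
    obtain ⟨l0, h0, l1, h1, d0, d1, rfl⟩ :=
      Statement10Aux.rdp_forward hk hn hrdp R hR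
    refine ⟨Statement10Aux.iv n l0 h0, Statement10Aux.iv n l1 h1, ?_, ?_, rfl⟩
    · obtain ⟨s, a, ha, hb, hl, hh⟩ := d0
      refine ⟨s, a, ha, hb, ?_⟩
      have h1' : 1 ≤ a * 2 ^ s := Nat.one_le_iff_ne_zero.2 (Nat.mul_ne_zero (by omega) (by positivity))
      ext x
      simp only [Set.mem_setOf_eq, Statement10Aux.iv]
      omega
    · obtain ⟨s, a, ha, hb, hl, hh⟩ := d1
      refine ⟨s, a, ha, hb, ?_⟩
      have h1' : 1 ≤ a * 2 ^ s := Nat.one_le_iff_ne_zero.2 (Nat.mul_ne_zero (by omega) (by positivity))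
      ext x
      simp only [Set.mem_setOf_eq, Statement10Aux.iv]
      omega
  · intro hdy
    have hn1 : 1 ≤ n := by rw [hn]; exact Nat.one_le_two_pow
    have hdyp : ∀ R ∈ P, Statement10Aux.DyP n R := by
      intro R hR
      obtain ⟨I₀, I₁, hI₀, hI₁, rfl⟩ := hdy R hR
      obtain ⟨s, a, ha, hb, rfl⟩ := hI₀
      obtain ⟨t, c, hc, hd, rfl⟩ := hI₁
      have h1' : 1 ≤ a * 2 ^ s := Nat.one_le_iff_ne_zero.2 (Nat.mul_ne_zero (by omega) (by positivity))
      have h2' : 1 ≤ c * 2 ^ t := Nat.one_le_iff_ne_zero.2 (Nat.mul_ne_zero (by omega) (by positivity))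
      refine ⟨(a - 1) * 2 ^ s, a * 2 ^ s - 1, (c - 1) * 2 ^ t, c * 2 ^ t - 1,
        ⟨s, a, ha, hb, rfl, rfl⟩, ⟨t, c, hc, hd, rfl, rfl⟩, ?_⟩
      ext x
      simp only [Set.mem_setOf_eq, Statement10Aux.mem_pr, Statement10Aux.iv]
      omega
    have dfull : Statement10Aux.Dy n 0 (n - 1) := by
      refine ⟨k, 1, le_rfl, by omega, by simp, by omega⟩
    have hpruniv : Statement10Aux.pr n 0 (n - 1) 0 (n - 1) = Set.univ := by
      ext x
      simp only [Statement10Aux.mem_pr, Set.mem_univ, iff_true]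
      have := (x 0).isLt
      have := (x 1).isLt
      omega
    have htriv : IsRDPPartition 2 n {Statement10Aux.pr n 0 (n - 1) 0 (n - 1)} := by
      rw [hpruniv]
      exact .triv
    have hres := Statement10Aux.glue P.card P {Statement10Aux.pr n 0 (n - 1) 0 (n - 1)}
      rfl (Statement10Aux.pr n 0 (n - 1) 0 (n - 1))
      ⟨0, n - 1, 0, n - 1, dfull, dfull, rfl⟩ htriv (Finset.mem_singleton_self _)
      hdyp (fun S hS T hT => hP.2.1 S hS T hT) (by rw [hpruniv, hP.2.2])
    rwa [Finset.erase_singleton, Finset.empty_union] at hres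
end

section
/- Let d > 1 and let θ be a real array indexed by ∏_{i=1}^d {1,...,n_i}, with average θ̄ = (Σ_j θ[j]) / ∏_{i=1}^d n_i over all indices j. Then Σ_j |θ[j] − θ̄|^{d/(d−1)} ≤ (1 + max_{i,j ∈ [d]} n_i/n_j)^{d/(d−1)} · TV(θ)^{d/(d−1)}, and as a consequence Σ_j |θ[j] − θ̄|² ≤ (1 + max_{i,j ∈ [d]} n_i/n_j)² · TV(θ)². -/
open MeasureTheory ProbabilityTheory BigOperators

attribute [local instance] Classical.propDecidable

/-- Total variation on a general (possibly non-square) grid `∏ i, {1,…,m i}`: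
the sum of `|θ u - θ v|` over all edges of the lattice graph. -/
def TVg {d : ℕ} (m : Fin d → ℕ) (θ : (∀ i, Fin (m i)) → ℝ) : ℝ :=
  ∑ x : ∀ i, Fin (m i), ∑ i : Fin d,
    if h : (x i : ℕ) + 1 < m i then
      |θ (Function.update x i ⟨(x i : ℕ) + 1, h⟩) - θ x| else 0


namespace S14
variable {d : ℕ} {m : Fin d → ℕ}

/-- edge term at `x` in direction `i`. -/
noncomputable def edge (θ : (∀ i, Fin (m i)) → ℝ) (i : Fin d) (x : ∀ i, Fin (m i)) : ℝ :=
  if h : (x i : ℕ) + 1 < m i then |θ (Function.update x i ⟨(x i : ℕ) + 1, h⟩) - θ x| else 0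

lemma edge_nonneg (θ : (∀ i, Fin (m i)) → ℝ) (i : Fin d) (x) : 0 ≤ edge θ i x := by
  unfold edge; split <;> simp [abs_nonneg]

lemma edge_update (θ : (∀ i, Fin (m i)) → ℝ) (i : Fin d) (x) (t : Fin (m i)) :
    edge θ i (Function.update x i t)
      = if h : (t : ℕ) + 1 < m i then
          |θ (Function.update x i ⟨(t : ℕ) + 1, h⟩) - θ (Function.update x i t)| else 0 := by
  unfold edge
  simp [Function.update_idem]

/-- total variation along the line through `x` in direction `i`. -/
noncomputable def V (θ : (∀ i, Fin (m i)) → ℝ) (i : Fin d) (x : ∀ i, Fin (m i)) : ℝ :=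
  ∑ t : Fin (m i), edge θ i (Function.update x i t)

lemma V_nonneg (θ : (∀ i, Fin (m i)) → ℝ) (i : Fin d) (x) : 0 ≤ V θ i x :=
  Finset.sum_nonneg fun t _ => edge_nonneg θ i _

lemma V_update (θ : (∀ i, Fin (m i)) → ℝ) (i : Fin d) (x) (t : Fin (m i)) :
    V θ i (Function.update x i t) = V θ i x := by
  unfold V; simp [Function.update_idem]

end S14

namespace S14
variable {d : ℕ} {m : Fin d → ℕ}

lemma abs_sub_le_V (θ : (∀ i, Fin (m i)) → ℝ) (i : Fin d) (x) (a b : Fin (m i)) :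
    |θ (Function.update x i b) - θ (Function.update x i a)| ≤ V θ i x := by
  set eN : ℕ → ℝ := fun t =>
    if h : t + 1 < m i then
      |θ (Function.update x i ⟨t + 1, h⟩) - θ (Function.update x i ⟨t, Nat.lt_of_succ_lt h⟩)|
    else 0 with heN
  have heNnn : ∀ t, 0 ≤ eN t := by
    intro t; rw [heN]; dsimp only; split <;> simp [abs_nonneg]
  have hV : ∑ t ∈ Finset.range (m i), eN t = V θ i x := by
    rw [← Fin.sum_univ_eq_sum_range eN (m i)]
    unfold V
    refine Finset.sum_congr rfl fun t _ => ?_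
    rw [edge_update, heN]
  have key : ∀ (a b : ℕ) (hab : a ≤ b) (hb : b < m i),
      |θ (Function.update x i ⟨b, hb⟩) - θ (Function.update x i ⟨a, lt_of_le_of_lt hab hb⟩)|
        ≤ ∑ t ∈ Finset.Ico a b, eN t := by
    intro a b hab
    induction b, hab using Nat.le_induction with
    | base => intro hb; simp
    | succ b hab ih =>
      intro hb
      have hb' : b < m i := Nat.lt_of_succ_lt hb
      rw [Finset.sum_Ico_succ_top hab]
      calc |θ (Function.update x i ⟨b + 1, hb⟩) - θ (Function.update x i ⟨a, _⟩)|
          ≤ |θ (Function.update x i ⟨b + 1, hb⟩) - θ (Function.update x i ⟨b, hb'⟩)|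
            + |θ (Function.update x i ⟨b, hb'⟩) - θ (Function.update x i ⟨a, _⟩)| := by
            exact abs_sub_le _ _ _
        _ ≤ eN b + ∑ t ∈ Finset.Ico a b, eN t := by
            refine add_le_add ?_ (ih hb')
            rw [heN]; dsimp only; rw [dif_pos hb]
        _ = (∑ t ∈ Finset.Ico a b, eN t) + eN b := add_comm _ _
  have ico_le : ∀ a b : ℕ, b ≤ m i → ∑ t ∈ Finset.Ico a b, eN t ≤ V θ i x := by
    intro a b hb
    rw [← hV]
    refine Finset.sum_le_sum_of_subset_of_nonneg ?_ (fun t _ _ => heNnn t)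
    intro t ht
    simp only [Finset.mem_Ico, Finset.mem_range] at *
    omega
  rcases le_total (a : ℕ) (b : ℕ) with h | h
  · have := key a b h b.isLt
    simp only [Fin.eta] at this
    exact this.trans (ico_le _ _ (by omega))
  · have := key b a h a.isLt
    simp only [Fin.eta] at this
    rw [abs_sub_comm]
    exact this.trans (ico_le _ _ (by omega))

end S14

namespace S14
variable {d : ℕ} {m : Fin d → ℕ}

lemma sum_sum_update (g : (∀ i, Fin (m i)) → ℝ) (i : Fin d) :
    ∑ x : ∀ i, Fin (m i), ∑ t : Fin (m i), g (Function.update x i t)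
      = (m i : ℝ) * ∑ x : ∀ i, Fin (m i), g x := by
  classical
  have hinv : Function.Involutive
      (fun p : (∀ j, Fin (m j)) × Fin (m i) => (Function.update p.1 i p.2, p.1 i)) := by
    intro p
    simp [Function.update_idem]
  have h := Equiv.sum_comp hinv.toPerm (fun p : (∀ j, Fin (m j)) × Fin (m i) => g p.1)
  simp only [Function.Involutive.coe_toPerm] at h
  calc ∑ x : ∀ i, Fin (m i), ∑ t : Fin (m i), g (Function.update x i t)
      = ∑ p : (∀ j, Fin (m j)) × Fin (m i), g (Function.update p.1 i p.2) := by
        rw [Fintype.sum_prod_type]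
    _ = ∑ p : (∀ j, Fin (m j)) × Fin (m i), g p.1 := h
    _ = ∑ x : ∀ i, Fin (m i), ∑ _t : Fin (m i), g x := by rw [Fintype.sum_prod_type]
    _ = (m i : ℝ) * ∑ x : ∀ i, Fin (m i), g x := by
        simp [Finset.sum_const, mul_comm, Finset.mul_sum]

lemma sum_V_eq (θ : (∀ i, Fin (m i)) → ℝ) (i : Fin d) :
    ∑ x : ∀ i, Fin (m i), V θ i x = (m i : ℝ) * ∑ x : ∀ i, Fin (m i), edge θ i x :=
  sum_sum_update (edge θ i) i

lemma path (θ : (∀ i, Fin (m i)) → ℝ) (x y : ∀ i, Fin (m i)) :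
    |θ x - θ y| ≤ ∑ i : Fin d, V θ i (fun j => if (j : ℕ) < (i : ℕ) then y j else x j) := by
  classical
  set wN : ℕ → (∀ i, Fin (m i)) := fun k j => if (j : ℕ) < k then y j else x j with hwN
  set A : ℕ → ℝ := fun n => if h : n < d then V θ ⟨n, h⟩ (wN n) else 0 with hA
  have key : ∀ k, k ≤ d → |θ x - θ (wN k)| ≤ ∑ t ∈ Finset.range k, A t := by
    intro k
    induction k with
    | zero =>
      intro _
      have : wN 0 = x := by funext j; simp [hwN]
      simp [this]
    | succ k ih =>
      intro hk1
      have hk : k < d := hk1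
      set i' : Fin d := ⟨k, hk⟩ with hi'
      have hwk : wN k i' = x i' := by simp [hwN, hi']
      have h1 : Function.update (wN k) i' (x i') = wN k := by
        rw [← hwk, Function.update_eq_self]
      have h2 : wN (k + 1) = Function.update (wN k) i' (y i') := by
        funext j
        rcases eq_or_ne j i' with rfl | hj
        · simp [hwN, Function.update_self, hi']
        · have hjk : (j : ℕ) ≠ k := fun h => hj (Fin.ext h)
          rw [Function.update_of_ne hj]
          simp only [hwN]
          by_cases h3 : (j : ℕ) < k
          · rw [if_pos (by omega), if_pos h3]
          · rw [if_neg (by omega), if_neg h3]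
      have hstep : |θ (wN k) - θ (wN (k + 1))| ≤ A k := by
        rw [h2]
        nth_rewrite 1 [← h1]
        have := abs_sub_le_V θ i' (wN k) (y i') (x i')
        rw [hA]
        dsimp only
        rw [dif_pos hk]
        exact this
      calc |θ x - θ (wN (k + 1))|
          ≤ |θ x - θ (wN k)| + |θ (wN k) - θ (wN (k + 1))| := abs_sub_le _ _ _
        _ ≤ (∑ t ∈ Finset.range k, A t) + A k := add_le_add (ih (by omega)) hstep
        _ = ∑ t ∈ Finset.range (k + 1), A t := (Finset.sum_range_succ A k).symm
  have hyd : wN d = y := by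
    funext j; simp [hwN, j.isLt]
  have hsum : ∑ t ∈ Finset.range d, A t
      = ∑ i : Fin d, V θ i (fun j => if (j : ℕ) < (i : ℕ) then y j else x j) := by
    rw [← Fin.sum_univ_eq_sum_range A d]
    refine Finset.sum_congr rfl fun i _ => ?_
    rw [hA]
    dsimp only
    rw [dif_pos i.isLt]
  have := key d le_rfl
  rw [hyd, hsum] at this
  exact this

end S14

namespace S14
variable {d : ℕ} {m : Fin d → ℕ}

lemma pair_count (θ : (∀ i, Fin (m i)) → ℝ) (i : Fin d) :
    ∑ x : ∀ i, Fin (m i), ∑ y : ∀ i, Fin (m i),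
        V θ i (fun j => if (j : ℕ) < (i : ℕ) then y j else x j)
      = (Fintype.card (∀ i, Fin (m i)) : ℝ) * ∑ z : ∀ i, Fin (m i), V θ i z := by
  classical
  have hinv : Function.Involutive
      (fun p : (∀ j, Fin (m j)) × (∀ j, Fin (m j)) =>
        ((fun j => if (j : ℕ) < (i : ℕ) then p.2 j else p.1 j : ∀ j, Fin (m j)),
         (fun j => if (j : ℕ) < (i : ℕ) then p.1 j else p.2 j : ∀ j, Fin (m j)))) := by
    intro p
    refine Prod.ext ?_ ?_ <;> funext j <;> by_cases h : (j : ℕ) < (i : ℕ) <;> simp [h]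
  have h := Equiv.sum_comp hinv.toPerm
    (fun p : (∀ j, Fin (m j)) × (∀ j, Fin (m j)) => V θ i p.1)
  simp only [Function.Involutive.coe_toPerm] at h
  calc ∑ x : ∀ i, Fin (m i), ∑ y : ∀ i, Fin (m i),
        V θ i (fun j => if (j : ℕ) < (i : ℕ) then y j else x j)
      = ∑ p : (∀ j, Fin (m j)) × (∀ j, Fin (m j)),
          V θ i (fun j => if (j : ℕ) < (i : ℕ) then p.2 j else p.1 j) := by
        rw [Fintype.sum_prod_type]
    _ = ∑ p : (∀ j, Fin (m j)) × (∀ j, Fin (m j)), V θ i p.1 := h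
    _ = ∑ x : ∀ i, Fin (m i), ∑ _y : ∀ i, Fin (m i), V θ i x := by rw [Fintype.sum_prod_type]
    _ = (Fintype.card (∀ i, Fin (m i)) : ℝ) * ∑ z : ∀ i, Fin (m i), V θ i z := by
        simp [Finset.sum_const, Finset.card_univ, mul_comm, Finset.mul_sum]

lemma poincare (hm : ∀ i, 1 ≤ m i) (θ : (∀ i, Fin (m i)) → ℝ) :
    ∑ x : ∀ i, Fin (m i), |θ x - (∑ y : ∀ i, Fin (m i), θ y) / ∏ i, (m i : ℝ)|
      ≤ ∑ i : Fin d, (m i : ℝ) * ∑ x : ∀ i, Fin (m i), edge θ i x := by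
  classical
  set N : ℝ := ∏ i, (m i : ℝ) with hN
  have hN0 : 0 < N := Finset.prod_pos fun i _ => by exact_mod_cast hm i
  have hcard : (Fintype.card (∀ i, Fin (m i)) : ℝ) = N := by
    rw [hN]; norm_cast; simp [Fintype.card_pi]
  have h1 : ∀ x, |θ x - (∑ y : ∀ i, Fin (m i), θ y) / N|
      ≤ (1 / N) * ∑ y : ∀ i, Fin (m i), |θ x - θ y| := by
    intro x
    have hx : θ x - (∑ y : ∀ i, Fin (m i), θ y) / N
        = (1 / N) * ∑ y : ∀ i, Fin (m i), (θ x - θ y) := by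
      rw [Finset.sum_sub_distrib, Finset.sum_const, Finset.card_univ, nsmul_eq_mul, hcard]
      field_simp
    rw [hx, abs_mul, abs_of_nonneg (by positivity : (0:ℝ) ≤ 1 / N)]
    exact mul_le_mul_of_nonneg_left (Finset.abs_sum_le_sum_abs _ _) (by positivity)
  calc ∑ x : ∀ i, Fin (m i), |θ x - (∑ y : ∀ i, Fin (m i), θ y) / N|
      ≤ ∑ x : ∀ i, Fin (m i), (1 / N) * ∑ y : ∀ i, Fin (m i), |θ x - θ y| :=
        Finset.sum_le_sum fun x _ => h1 x
    _ = (1 / N) * ∑ x : ∀ i, Fin (m i), ∑ y : ∀ i, Fin (m i), |θ x - θ y| := by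
        rw [Finset.mul_sum]
    _ ≤ (1 / N) * ∑ x : ∀ i, Fin (m i), ∑ y : ∀ i, Fin (m i),
          ∑ i : Fin d, V θ i (fun j => if (j : ℕ) < (i : ℕ) then y j else x j) := by
        refine mul_le_mul_of_nonneg_left ?_ (by positivity)
        refine Finset.sum_le_sum fun x _ => Finset.sum_le_sum fun y _ => path θ x y
    _ = (1 / N) * ∑ i : Fin d, ∑ x : ∀ i, Fin (m i), ∑ y : ∀ i, Fin (m i),
          V θ i (fun j => if (j : ℕ) < (i : ℕ) then y j else x j) := by
        congr 1
        have hswap : (∑ x : ∀ i, Fin (m i), ∑ y : ∀ i, Fin (m i),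
              ∑ i : Fin d, V θ i (fun j => if (j : ℕ) < (i : ℕ) then y j else x j))
            = ∑ x : ∀ i, Fin (m i), ∑ i : Fin d, ∑ y : ∀ i, Fin (m i),
              V θ i (fun j => if (j : ℕ) < (i : ℕ) then y j else x j) :=
          Finset.sum_congr rfl fun x _ => Finset.sum_comm
        rw [hswap, Finset.sum_comm]
    _ = (1 / N) * ∑ i : Fin d, N * ((m i : ℝ) * ∑ x : ∀ i, Fin (m i), edge θ i x) := by
        congr 1
        refine Finset.sum_congr rfl fun i _ => ?_
        rw [pair_count, hcard, sum_V_eq]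
    _ = ∑ i : Fin d, (m i : ℝ) * ∑ x : ∀ i, Fin (m i), edge θ i x := by
        rw [← Finset.mul_sum, ← mul_assoc]
        rw [one_div, inv_mul_cancel₀ (ne_of_gt hN0), one_mul]

end S14

namespace S14
variable {d : ℕ} {m : Fin d → ℕ}

lemma pointwise_bound (θ : (∀ i, Fin (m i)) → ℝ) (a : ℝ) (i : Fin d) (x)
    (c : ℕ) (hc0 : 0 < c) (hc : c ≤ m i) :
    |θ x - a| ≤ ∑ t : Fin (m i),
      ((c : ℝ)⁻¹ * |θ (Function.update x i t) - a|
        + ∑ j : Fin d, edge θ j (Function.update x i t)) := by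
  classical
  have hmi : (0 : ℝ) < (m i : ℝ) := by exact_mod_cast lt_of_lt_of_le hc0 hc
  have h1 : ∀ t : Fin (m i), |θ x - a| ≤ |θ (Function.update x i t) - a| + V θ i x := by
    intro t
    have hx : θ x - a = (θ (Function.update x i t) - a) + (θ x - θ (Function.update x i t)) := by
      ring
    rw [hx]
    refine (abs_add_le _ _).trans (add_le_add_right ?_ _)
    have := abs_sub_le_V θ i x t (x i)
    rwa [Function.update_eq_self] at this
  have h2 : (m i : ℝ) * |θ x - a|
      ≤ (∑ t : Fin (m i), |θ (Function.update x i t) - a|) + (m i : ℝ) * V θ i x := by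
    have h := Finset.sum_le_sum fun t (_ : t ∈ Finset.univ) => h1 t
    simpa [Finset.sum_add_distrib, Finset.sum_const, Finset.card_univ, nsmul_eq_mul,
      mul_comm] using h
  have h3 : |θ x - a|
      ≤ (m i : ℝ)⁻¹ * (∑ t : Fin (m i), |θ (Function.update x i t) - a|) + V θ i x := by
    have h3' := mul_le_mul_of_nonneg_left h2 (inv_nonneg.2 hmi.le)
    rw [mul_add, inv_mul_cancel_left₀ (ne_of_gt hmi), inv_mul_cancel_left₀ (ne_of_gt hmi)] at h3'
    exact h3'
  have h4 : (m i : ℝ)⁻¹ * (∑ t : Fin (m i), |θ (Function.update x i t) - a|)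
      ≤ (c : ℝ)⁻¹ * (∑ t : Fin (m i), |θ (Function.update x i t) - a|) := by
    refine mul_le_mul_of_nonneg_right ?_ (Finset.sum_nonneg fun t _ => abs_nonneg _)
    exact inv_anti₀ (by exact_mod_cast hc0) (by exact_mod_cast hc)
  have h5 : V θ i x ≤ ∑ t : Fin (m i), ∑ j : Fin d, edge θ j (Function.update x i t) := by
    refine Finset.sum_le_sum fun t _ => ?_
    exact Finset.single_le_sum (f := fun j => edge θ j (Function.update x i t))
      (fun j _ => edge_nonneg θ j _) (Finset.mem_univ i)
  rw [Finset.sum_add_distrib, ← Finset.mul_sum]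
  exact h3.trans (add_le_add h4 h5)

end S14

namespace S14
open ENNReal
variable {d : ℕ} {m : Fin d → ℕ}

lemma lintegral_pi_count (g : (∀ i, Fin (m i)) → ℝ≥0∞) :
    ∫⁻ x, g x ∂(Measure.pi fun i => (Measure.count : Measure (Fin (m i))))
      = ∑ x : ∀ i, Fin (m i), g x := by
  rw [lintegral_fintype]
  have hx : ∀ x : ∀ i, Fin (m i),
      (Measure.pi fun i => (Measure.count : Measure (Fin (m i)))) {x} = 1 := by
    intro x
    rw [← Set.univ_pi_singleton, Measure.pi_pi]
    simp [Measure.count_singleton]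
  simp [hx]

lemma lintegral_count_fin {n : ℕ} (g : Fin n → ℝ≥0∞) :
    ∫⁻ t, g t ∂(Measure.count) = ∑ t, g t := by
  rw [MeasureTheory.lintegral_count, tsum_fintype]

end S14

namespace S14
open ENNReal MeasureTheory
variable {d : ℕ} {m : Fin d → ℕ}

lemma main_lw (hd : 1 < d) (F : (∀ i, Fin (m i)) → ℝ≥0∞) :
    ∑ x : ∀ i, Fin (m i),
        ∏ i : Fin d, (∑ t : Fin (m i), F (Function.update x i t)) ^ ((1:ℝ)/((d:ℝ)-1))
      ≤ (∑ x : ∀ i, Fin (m i), F x) ^ ((d:ℝ)/((d:ℝ)-1)) := by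
  classical
  have hd1 : (1:ℝ) < (d:ℝ) := by exact_mod_cast hd
  have hd0 : (d:ℝ) ≠ 0 := by positivity
  have hdm1 : (d:ℝ) - 1 ≠ 0 := by linarith
  have hconj : Real.HolderConjugate (Fintype.card (Fin d)) ((d:ℝ)/((d:ℝ)-1)) := by
    rw [Fintype.card_fin]
    refine Real.holderConjugate_iff.mpr ⟨hd1, ?_⟩
    rw [inv_div]
    field_simp
    ring
  have hmeas : Measurable F := measurable_of_countable F
  have key := lintegral_prod_lintegral_pow_le
    (fun i => (Measure.count : Measure (Fin (m i)))) hconj hmeas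
  rw [lintegral_pi_count, lintegral_pi_count] at key
  simp only [lintegral_count_fin, Fintype.card_fin] at key
  exact key

end S14

namespace S14

lemma sum_rpow_le_rpow_sum {ι : Type*} [Fintype ι] (b : ι → ℝ) (hb : ∀ i, 0 ≤ b i)
    {q : ℝ} (hq : 1 ≤ q) : ∑ i, b i ^ q ≤ (∑ i, b i) ^ q := by
  classical
  set S := ∑ i, b i with hS
  have hS0 : 0 ≤ S := Finset.sum_nonneg fun i _ => hb i
  have hb_le : ∀ i, b i ≤ S := fun i => Finset.single_le_sum (fun j _ => hb j) (Finset.mem_univ i)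
  have he : (1:ℝ) + (q - 1) = q := by ring
  calc ∑ i, b i ^ q ≤ ∑ i, b i * S ^ (q - 1) := by
        refine Finset.sum_le_sum fun i _ => ?_
        have h1 : b i ^ q = b i * b i ^ (q - 1) := by
          rw [← he, Real.rpow_add' (hb i) (by rw [he]; linarith), Real.rpow_one, he]
        rw [h1]
        exact mul_le_mul_of_nonneg_left
          (Real.rpow_le_rpow (hb i) (hb_le i) (by linarith)) (hb i)
    _ = S * S ^ (q - 1) := by rw [← Finset.sum_mul]
    _ = S ^ q := by
        rw [← he, Real.rpow_add' hS0 (by rw [he]; linarith), Real.rpow_one, he]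

end S14

open S14 in
open scoped ENNReal in
/-- Discrete Gagliardo–Nirenberg–Sobolev inequality,
Proposition 9.5 of the paper. -/
theorem statement14 (d : ℕ) (hd : 1 < d) (m : Fin d → ℕ) (hm : ∀ i, 1 ≤ m i)
    (θ : (∀ i, Fin (m i)) → ℝ) :
    (∑ x : ∀ i, Fin (m i),
        |θ x - (∑ y : ∀ i, Fin (m i), θ y) / ∏ i, (m i : ℝ)| ^ ((d : ℝ) / ((d : ℝ) - 1))
      ≤ (1 + ⨆ i : Fin d, ⨆ j : Fin d, (m i : ℝ) / (m j : ℝ)) ^ ((d : ℝ) / ((d : ℝ) - 1))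
          * TVg m θ ^ ((d : ℝ) / ((d : ℝ) - 1))) ∧
    (∑ x : ∀ i, Fin (m i),
        |θ x - (∑ y : ∀ i, Fin (m i), θ y) / ∏ i, (m i : ℝ)| ^ 2
      ≤ (1 + ⨆ i : Fin d, ⨆ j : Fin d, (m i : ℝ) / (m j : ℝ)) ^ 2
          * TVg m θ ^ 2) := by
  classical
  have hd1 : (1:ℝ) < (d:ℝ) := by exact_mod_cast hd
  have hdm1 : (0:ℝ) < (d:ℝ) - 1 := by linarith
  set p : ℝ := (d : ℝ) / ((d : ℝ) - 1) with hp
  have hp0 : 0 < p := by positivity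
  set a : ℝ := (∑ y : ∀ i, Fin (m i), θ y) / ∏ i, (m i : ℝ) with ha
  set R : ℝ := ⨆ i : Fin d, ⨆ j : Fin d, (m i : ℝ) / (m j : ℝ) with hRdef
  -- basic facts about R
  have hR : ∀ i j : Fin d, (m i : ℝ) / (m j : ℝ) ≤ R := by
    intro i j
    have h1 : (m i : ℝ) / (m j : ℝ) ≤ ⨆ j' : Fin d, (m i : ℝ) / (m j' : ℝ) :=
      le_ciSup (f := fun j' : Fin d => (m i : ℝ) / (m j' : ℝ))
        ((Set.finite_range _).bddAbove) j
    exact h1.trans (le_ciSup ((Set.finite_range fun i' : Fin d =>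
      ⨆ j' : Fin d, (m i' : ℝ) / (m j' : ℝ)).bddAbove) i)
  obtain ⟨i₀, -, hi₀⟩ := Finset.exists_min_image (Finset.univ : Finset (Fin d))
    (fun i => m i) ⟨⟨0, by omega⟩, Finset.mem_univ _⟩
  have hc0 : 0 < m i₀ := hm i₀
  have hc0' : (0:ℝ) < (m i₀ : ℝ) := by exact_mod_cast hc0
  have hR1 : (1:ℝ) ≤ R := by
    have := hR i₀ i₀
    rwa [div_self (ne_of_gt hc0')] at this
  -- total variation pieces
  set TVi : Fin d → ℝ := fun i => ∑ x : ∀ i, Fin (m i), edge θ i x with hTVidef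
  have hTVi_nn : ∀ i, 0 ≤ TVi i := fun i =>
    Finset.sum_nonneg fun x _ => edge_nonneg θ i x
  have hTV : TVg m θ = ∑ i : Fin d, TVi i := by
    rw [TVg, Finset.sum_comm]
    exact Finset.sum_congr rfl fun i _ => rfl
  have hTVnn : 0 ≤ TVg m θ := by
    rw [hTV]; exact Finset.sum_nonneg fun i _ => hTVi_nn i
  have hK0 : 0 ≤ (1 + R) * TVg m θ := by positivity
  -- L¹ Poincaré
  have hpoin : ∑ x : ∀ i, Fin (m i), |θ x - a| ≤ ∑ i : Fin d, (m i : ℝ) * TVi i :=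
    poincare hm θ
  have hL1 : (m i₀ : ℝ)⁻¹ * ∑ x : ∀ i, Fin (m i), |θ x - a| ≤ R * TVg m θ := by
    calc (m i₀ : ℝ)⁻¹ * ∑ x : ∀ i, Fin (m i), |θ x - a|
        ≤ (m i₀ : ℝ)⁻¹ * ∑ i : Fin d, (m i : ℝ) * TVi i :=
          mul_le_mul_of_nonneg_left hpoin (by positivity)
      _ = ∑ i : Fin d, ((m i : ℝ) / (m i₀ : ℝ)) * TVi i := by
          rw [Finset.mul_sum]
          exact Finset.sum_congr rfl fun i _ => by ring
      _ ≤ ∑ i : Fin d, R * TVi i :=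
          Finset.sum_le_sum fun i _ =>
            mul_le_mul_of_nonneg_right (hR i i₀) (hTVi_nn i)
      _ = R * TVg m θ := by rw [hTV, Finset.mul_sum]
  -- the majorant
  set F : (∀ i, Fin (m i)) → ℝ :=
    fun y => (m i₀ : ℝ)⁻¹ * |θ y - a| + ∑ j : Fin d, edge θ j y with hFdef
  have hFnn : ∀ y, 0 ≤ F y := fun y =>
    add_nonneg (by positivity) (Finset.sum_nonneg fun j _ => edge_nonneg θ j y)
  have hFsum : ∑ y : ∀ i, Fin (m i), F y ≤ (1 + R) * TVg m θ := by
    rw [hFdef]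
    rw [Finset.sum_add_distrib, ← Finset.mul_sum]
    have h2 : ∑ y : ∀ i, Fin (m i), ∑ j : Fin d, edge θ j y = TVg m θ := by
      rw [hTV, Finset.sum_comm]
    rw [h2]
    calc (m i₀ : ℝ)⁻¹ * (∑ y : ∀ i, Fin (m i), |θ y - a|) + TVg m θ
        ≤ R * TVg m θ + TVg m θ := add_le_add hL1 le_rfl
      _ = (1 + R) * TVg m θ := by ring
  have hptwise : ∀ (i : Fin d) (x : ∀ i, Fin (m i)),
      |θ x - a| ≤ ∑ t : Fin (m i), F (Function.update x i t) :=
    fun i x => pointwise_bound θ a i x (m i₀) hc0 (hi₀ i (Finset.mem_univ i))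
  -- pass to ℝ≥0∞
  set Fe : (∀ i, Fin (m i)) → ℝ≥0∞ := fun y => ENNReal.ofReal (F y) with hFedef
  have hFe_sum : ∑ y : ∀ i, Fin (m i), Fe y = ENNReal.ofReal (∑ y : ∀ i, Fin (m i), F y) :=
    (ENNReal.ofReal_sum_of_nonneg fun y _ => hFnn y).symm
  have hupd : ∀ (i : Fin d) (x : ∀ i, Fin (m i)),
      ENNReal.ofReal |θ x - a| ≤ ∑ t : Fin (m i), Fe (Function.update x i t) := by
    intro i x
    calc ENNReal.ofReal |θ x - a| ≤ ENNReal.ofReal (∑ t : Fin (m i), F (Function.update x i t)) :=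
          ENNReal.ofReal_le_ofReal (hptwise i x)
      _ = ∑ t : Fin (m i), Fe (Function.update x i t) :=
          ENNReal.ofReal_sum_of_nonneg fun t _ => hFnn _
  have hpt2 : ∀ x : ∀ i, Fin (m i),
      ENNReal.ofReal |θ x - a| ^ p
        ≤ ∏ i : Fin d, (∑ t : Fin (m i), Fe (Function.update x i t)) ^ ((1:ℝ)/((d:ℝ)-1)) := by
    intro x
    have h1 : ENNReal.ofReal |θ x - a| ^ p
        = ∏ _i : Fin d, ENNReal.ofReal |θ x - a| ^ ((1:ℝ)/((d:ℝ)-1)) := by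
      rw [Finset.prod_const, Finset.card_univ, Fintype.card_fin,
        ← ENNReal.rpow_natCast (ENNReal.ofReal |θ x - a| ^ ((1:ℝ)/((d:ℝ)-1))) d,
        ← ENNReal.rpow_mul]
      congr 1
      rw [hp]
      field_simp
    rw [h1]
    exact Finset.prod_le_prod' fun i _ =>
      ENNReal.rpow_le_rpow (hupd i x) (by positivity)
  have H1 : ∑ x : ∀ i, Fin (m i), ENNReal.ofReal |θ x - a| ^ p
      ≤ ENNReal.ofReal ((1 + R) * TVg m θ) ^ p := by
    calc ∑ x : ∀ i, Fin (m i), ENNReal.ofReal |θ x - a| ^ p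
        ≤ ∑ x : ∀ i, Fin (m i),
            ∏ i : Fin d, (∑ t : Fin (m i), Fe (Function.update x i t)) ^ ((1:ℝ)/((d:ℝ)-1)) :=
          Finset.sum_le_sum fun x _ => hpt2 x
      _ ≤ (∑ y : ∀ i, Fin (m i), Fe y) ^ p := main_lw hd Fe
      _ = ENNReal.ofReal (∑ y : ∀ i, Fin (m i), F y) ^ p := by rw [hFe_sum]
      _ ≤ ENNReal.ofReal ((1 + R) * TVg m θ) ^ p :=
          ENNReal.rpow_le_rpow (ENNReal.ofReal_le_ofReal hFsum) hp0.le
  -- back to ℝ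
  have part1' : ∑ x : ∀ i, Fin (m i), |θ x - a| ^ p ≤ ((1 + R) * TVg m θ) ^ p := by
    have hL : ∑ x : ∀ i, Fin (m i), ENNReal.ofReal |θ x - a| ^ p
        = ENNReal.ofReal (∑ x : ∀ i, Fin (m i), |θ x - a| ^ p) := by
      rw [ENNReal.ofReal_sum_of_nonneg fun x _ => Real.rpow_nonneg (abs_nonneg _) p]
      exact Finset.sum_congr rfl fun x _ =>
        ENNReal.ofReal_rpow_of_nonneg (abs_nonneg _) hp0.le
    have hRq : ENNReal.ofReal ((1 + R) * TVg m θ) ^ p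
        = ENNReal.ofReal (((1 + R) * TVg m θ) ^ p) :=
      ENNReal.ofReal_rpow_of_nonneg hK0 hp0.le
    rw [hL, hRq] at H1
    exact (ENNReal.ofReal_le_ofReal_iff (Real.rpow_nonneg hK0 p)).mp H1
  constructor
  · calc ∑ x : ∀ i, Fin (m i), |θ x - a| ^ p ≤ ((1 + R) * TVg m θ) ^ p := part1'
      _ = (1 + R) ^ p * TVg m θ ^ p := Real.mul_rpow (by positivity) hTVnn
  · -- second part via ℓ^p ⊂ ℓ²
    set q : ℝ := 2 / p with hq
    have hpq : p * q = 2 := by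
      rw [hq]; field_simp
    have hq1 : 1 ≤ q := by
      have hd2 : (2:ℝ) ≤ (d:ℝ) := by exact_mod_cast hd
      rw [hq, hp, le_div_iff₀ hp0, one_mul, div_le_iff₀ hdm1]
      linarith
    have hstep : ∑ x : ∀ i, Fin (m i), (|θ x - a| ^ p) ^ q
        ≤ (∑ x : ∀ i, Fin (m i), |θ x - a| ^ p) ^ q :=
      sum_rpow_le_rpow_sum _ (fun x => Real.rpow_nonneg (abs_nonneg _) p) hq1
    have hsq : ∀ x : ∀ i, Fin (m i), (|θ x - a| ^ p) ^ q = |θ x - a| ^ 2 := by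
      intro x
      rw [← Real.rpow_mul (abs_nonneg _), hpq,
        show (2:ℝ) = ((2:ℕ):ℝ) by norm_num, Real.rpow_natCast]
    have hfin : (∑ x : ∀ i, Fin (m i), |θ x - a| ^ p) ^ q ≤ ((1 + R) * TVg m θ) ^ 2 := by
      calc (∑ x : ∀ i, Fin (m i), |θ x - a| ^ p) ^ q
          ≤ (((1 + R) * TVg m θ) ^ p) ^ q :=
            Real.rpow_le_rpow (Finset.sum_nonneg fun x _ =>
              Real.rpow_nonneg (abs_nonneg _) p) part1' (by linarith)
        _ = ((1 + R) * TVg m θ) ^ (2:ℝ) := by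
            rw [← Real.rpow_mul hK0, hpq]
        _ = ((1 + R) * TVg m θ) ^ 2 := by
            rw [← Real.rpow_natCast ((1 + R) * TVg m θ) 2]; norm_num
    calc ∑ x : ∀ i, Fin (m i), |θ x - a| ^ 2
        = ∑ x : ∀ i, Fin (m i), (|θ x - a| ^ p) ^ q :=
          (Finset.sum_congr rfl fun x _ => hsq x).symm
      _ ≤ (∑ x : ∀ i, Fin (m i), |θ x - a| ^ p) ^ q := hstep
      _ ≤ ((1 + R) * TVg m θ) ^ 2 := hfin
      _ = (1 + R) ^ 2 * TVg m θ ^ 2 := mul_pow _ _ 2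
end

section
/- Fix a positive integer r. There exists a constant C_r depending only on r such that for every θ ∈ ℝ^n there exists a vector θ' ∈ ℝ^n that is a polynomial vector of degree r−1 (i.e. θ'_i = f(i/n) for all i, for some real polynomial f of degree at most r−1) satisfying max_{1 ≤ i ≤ n} |θ_i − θ'_i| ≤ C_r·n^{r−1}·‖D^(r)(θ)‖_1 = C_r·V^(r)(θ). -/
open MeasureTheory ProbabilityTheory BigOperators

attribute [local instance] Classical.propDecidable

section Aux18
open Finset Function

local notation "Δ" => fwdDiff (1:ℕ)

lemma aux18_P1 (m r : ℕ) (X : ℕ → ℝ) :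
    ∑ k ∈ range (r+2), ((m+1).choose k : ℝ) * X k
    = ∑ k ∈ range (r+2), (m.choose k : ℝ) * X k
      + ∑ k ∈ range (r+1), (m.choose k : ℝ) * X (k+1) := by
  rw [Finset.sum_range_succ' _ (r+1),
    Finset.sum_range_succ' (fun k => (m.choose k : ℝ) * X k) (r+1)]
  simp only [Nat.choose_succ_succ, Nat.cast_add, add_mul, Finset.sum_add_distrib,
    Nat.choose_zero_right]
  ring

lemma aux18_P2 (m r : ℕ) (Y : ℕ → ℝ) :
    ∑ j ∈ range (m - r), ((m - j).choose (r+1) : ℝ) * Y j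
    = ∑ j ∈ range (m - (r+1)), ((m - 1 - j).choose (r+1) : ℝ) * Y j
      + ∑ j ∈ range (m - r), ((m - 1 - j).choose r : ℝ) * Y j := by
  rcases le_or_gt m r with h | h
  · simp [Nat.sub_eq_zero_of_le h, Nat.sub_eq_zero_of_le (h.trans (Nat.le_succ r))]
  · have h1 : m - r = (m - (r+1)) + 1 := by omega
    have hcongr : ∑ j ∈ range (m - r), ((m - j).choose (r+1) : ℝ) * Y j
        = ∑ j ∈ range (m - r), (((m - 1 - j).choose r : ℝ) + ((m - 1 - j).choose (r+1) : ℝ)) * Y j := by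
      refine Finset.sum_congr rfl fun j hj => ?_
      have hj' : j < m - r := Finset.mem_range.mp hj
      have h2 : m - j = (m - 1 - j) + 1 := by omega
      rw [h2, Nat.choose_succ_succ, Nat.cast_add]
    rw [hcongr]
    simp only [add_mul, Finset.sum_add_distrib]
    rw [h1, Finset.sum_range_succ (fun j => ((m - 1 - j).choose (r+1) : ℝ) * Y j)]
    have h3 : m - 1 - (m - (r+1)) = r := by omega
    rw [h3, Nat.choose_succ_self]
    push_cast
    ring

/-- Discrete Taylor formula with remainder. -/
lemma aux18_key (r : ℕ) : ∀ g : ℕ → ℝ, ∀ m : ℕ,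
    g m = ∑ k ∈ range (r+1), (m.choose k : ℝ) * Δ^[k] g 0
      + ∑ j ∈ range (m - r), ((m - 1 - j).choose r : ℝ) * Δ^[r+1] g j := by
  induction r with
  | zero =>
    intro g m
    induction m with
    | zero => simp
    | succ m ihm =>
      simp only [zero_add, Nat.sub_zero, Nat.succ_sub_one, Nat.choose_zero_right, Nat.cast_one,
        one_mul, Finset.range_one, Finset.sum_singleton, Function.iterate_zero, id_eq,
        Function.iterate_one] at ihm ⊢
      rw [Finset.sum_range_succ]
      have : Δ g m = g (m+1) - g m := by simp [fwdDiff]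
      rw [this]
      linarith [ihm]
  | succ r ihr =>
    intro g m
    induction m with
    | zero =>
      simp only [Nat.zero_sub, Finset.range_zero, Finset.sum_empty, add_zero]
      rw [Finset.sum_range_succ' (fun k => ((Nat.choose 0 k : ℕ) : ℝ) * Δ^[k] g 0) (r+1)]
      simp
    | succ m ihm =>
      have hstep : g (m+1) = g m + Δ g m := by simp [fwdDiff]
      have hih := ihr (Δ g) m
      have hiter : ∀ k, Δ^[k] (Δ g) = Δ^[k+1] g := by
        intro k; rw [Function.iterate_succ_apply]
      simp only [hiter] at hih
      rw [hstep, ihm, hih]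
      have e1 : m + 1 - (r+1) = m - r := by omega
      have e2 : ∀ j, m + 1 - 1 - j = m - j := by intro j; omega
      rw [e1]
      simp only [e2]
      rw [aux18_P1 m r (fun k => Δ^[k] g 0), aux18_P2 m r (fun j => Δ^[r+2] g j)]
      ring

end Aux18

/-- Approximation of an arbitrary sequence by a single polynomial of
degree `r-1` up to `C_r · V^(r)(θ)` in sup norm, Lemma 8.7 of the paper. -/
theorem statement18 (r : ℕ) (hr : 1 ≤ r) :
    ∃ Cr : ℝ, 0 < Cr ∧ ∀ n : ℕ, 1 ≤ n → ∀ θ : Fin n → ℝ,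
      ∃ f : Polynomial ℝ, f.natDegree ≤ r - 1 ∧
        ∀ i : Fin n, |θ i - Polynomial.eval ((((i : ℕ) : ℝ) + 1) / n) f| ≤ Cr * Vr r θ := by
  obtain ⟨s, rfl⟩ : ∃ s, r = s + 1 := ⟨r - 1, by omega⟩
  refine ⟨1, one_pos, ?_⟩
  intro n hn θ
  set g : ℕ → ℝ := fun j => if h : j < n then θ ⟨j, h⟩ else 0 with hg
  refine ⟨∑ k ∈ Finset.range (s+1), Polynomial.C ((fwdDiff 1)^[k] g 0 / (k.factorial : ℝ)) *
      ((descPochhammer ℝ k).comp (Polynomial.C (n:ℝ) * Polynomial.X - 1)), ?_, ?_⟩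
  · apply Polynomial.natDegree_sum_le_of_forall_le
    intro k hk
    refine le_trans (Polynomial.natDegree_C_mul_le _ _) ?_
    refine le_trans (Polynomial.natDegree_comp_le) ?_
    have h1 : (Polynomial.C (n:ℝ) * Polynomial.X - 1 : Polynomial ℝ).natDegree ≤ 1 := by
      refine le_trans (Polynomial.natDegree_sub_le _ _) ?_
      simp only [Polynomial.natDegree_one, max_le_iff]
      exact ⟨le_trans (Polynomial.natDegree_C_mul_le _ _) Polynomial.natDegree_X_le, by omega⟩
    calc (descPochhammer ℝ k).natDegree * (Polynomial.C (n:ℝ) * Polynomial.X - 1).natDegree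
        ≤ (descPochhammer ℝ k).natDegree * 1 := Nat.mul_le_mul_left _ h1
      _ = k := by rw [descPochhammer_natDegree, mul_one]
      _ ≤ s := by exact Nat.lt_succ_iff.mp (Finset.mem_range.mp hk)
  · intro i
    have hn0 : (n:ℝ) ≠ 0 := by positivity
    have heval : Polynomial.eval ((((i : ℕ) : ℝ) + 1) / n)
        (Polynomial.C (n:ℝ) * Polynomial.X - 1 : Polynomial ℝ) = ((i:ℕ) : ℝ) := by
      simp only [Polynomial.eval_sub, Polynomial.eval_mul, Polynomial.eval_C, Polynomial.eval_X,
        Polynomial.eval_one]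
      field_simp
      ring
    have hfe : Polynomial.eval ((((i : ℕ) : ℝ) + 1) / n)
        (∑ k ∈ Finset.range (s+1), Polynomial.C ((fwdDiff 1)^[k] g 0 / (k.factorial : ℝ)) *
          ((descPochhammer ℝ k).comp (Polynomial.C (n:ℝ) * Polynomial.X - 1)))
        = ∑ k ∈ Finset.range (s+1), ((i:ℕ).choose k : ℝ) * (fwdDiff 1)^[k] g 0 := by
      rw [Polynomial.eval_finset_sum]
      refine Finset.sum_congr rfl fun k _ => ?_
      rw [Polynomial.eval_mul, Polynomial.eval_C, Polynomial.eval_comp, heval,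
        descPochhammer_eval_eq_descFactorial, Nat.descFactorial_eq_factorial_mul_choose]
      have : ((k.factorial : ℝ)) ≠ 0 := by positivity
      push_cast
      field_simp
    have hkey := aux18_key s g (i : ℕ)
    have hgi : g (i : ℕ) = θ i := by simp [hg, i.isLt]
    have hdiff : θ i - Polynomial.eval ((((i : ℕ) : ℝ) + 1) / n)
        (∑ k ∈ Finset.range (s+1), Polynomial.C ((fwdDiff 1)^[k] g 0 / (k.factorial : ℝ)) *
          ((descPochhammer ℝ k).comp (Polynomial.C (n:ℝ) * Polynomial.X - 1)))
        = ∑ j ∈ Finset.range ((i:ℕ) - s), (((i:ℕ) - 1 - j).choose s : ℝ) * (fwdDiff 1)^[s+1] g j := by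
      rw [hfe, ← hgi, hkey]; ring
    rw [hdiff, one_mul]
    -- now bound the remainder
    have hVr : Vr (s+1) θ = (n:ℝ)^s *
        ∑ j ∈ Finset.range (n - (s+1)), |(fwdDiff 1)^[s+1] g j| := by
      unfold Vr
      simp only [Nat.add_sub_cancel]
      congr 1
      refine Finset.sum_congr rfl fun j _ => ?_
      congr 1
      rw [fwdDiff_iter_eq_sum_shift]
      refine Finset.sum_congr rfl fun k _ => ?_
      simp only [smul_eq_mul, mul_one, hg, zsmul_eq_mul]
      push_cast
      ring
    rw [hVr, Finset.mul_sum]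
    calc |∑ j ∈ Finset.range ((i:ℕ) - s), (((i:ℕ) - 1 - j).choose s : ℝ) * (fwdDiff 1)^[s+1] g j|
        ≤ ∑ j ∈ Finset.range ((i:ℕ) - s), |(((i:ℕ) - 1 - j).choose s : ℝ) * (fwdDiff 1)^[s+1] g j| :=
          Finset.abs_sum_le_sum_abs _ _
      _ ≤ ∑ j ∈ Finset.range (n - (s+1)), |(((i:ℕ) - 1 - j).choose s : ℝ) * (fwdDiff 1)^[s+1] g j| := by
          refine Finset.sum_le_sum_of_subset_of_nonneg ?_ (fun j _ _ => abs_nonneg _)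
          refine Finset.range_subset_range.mpr ?_
          have := i.isLt; omega
      _ ≤ ∑ j ∈ Finset.range (n - (s+1)), (n:ℝ)^s * |(fwdDiff 1)^[s+1] g j| := by
          refine Finset.sum_le_sum fun j _ => ?_
          rw [abs_mul]
          refine mul_le_mul_of_nonneg_right ?_ (abs_nonneg _)
          rw [abs_of_nonneg (by positivity)]
          have hnat : ((i:ℕ) - 1 - j).choose s ≤ n ^ s := by
            calc ((i:ℕ) - 1 - j).choose s ≤ ((i:ℕ) - 1 - j).descFactorial s := by
                  rw [Nat.descFactorial_eq_factorial_mul_choose]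
                  exact Nat.le_mul_of_pos_left _ (Nat.factorial_pos s)
              _ ≤ ((i:ℕ) - 1 - j) ^ s := Nat.descFactorial_le_pow _ _
              _ ≤ n ^ s := Nat.pow_le_pow_left (by have := i.isLt; omega) s
          calc ((((i:ℕ) - 1 - j).choose s : ℕ) : ℝ) ≤ ((n ^ s : ℕ) : ℝ) := by exact_mod_cast hnat
            _ = (n:ℝ)^s := by push_cast; ring
end
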